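/- arXiv:1207.0107 — 8 statements merged into one kernel-verified Lean document; each statement's English description precedes it below -/
import Mathlib

section
/- Let q ∈ ℂ with |q| > 1, let n, p be positive integers, and let A : ℂ∖{0} → Mat_n(ℂ) and B : ℂ∖{0} → Mat_p(ℂ) be matrices whose entries are Laurent polynomials in z and such that A(z) and B(z) are invertible for every z ≠ 0. Let r > 0 and let F : {z ∈ ℂ : 0 < |z| < r} → Mat_{p,n}(ℂ) be a matrix-valued function holomorphic (entrywise) on the punctured disk, satisfying F(qz) = B(z) · F(z) · A(z)⁻¹ for every z with 0 < |z| and |qz| < r. Then F extends to a function holomorphic (entrywise) on all of ℂ∖{0} satisfying the same functional equation for all z ≠ 0. -/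
open Complex

section Aux

/-- Finset products of differentiable functions are differentiable. -/
lemma diffOn_finset_prod {ι : Type*} (u : Finset ι) (f : ι → ℂ → ℂ) (s : Set ℂ)
    (h : ∀ i ∈ u, DifferentiableOn ℂ (f i) s) :
    DifferentiableOn ℂ (fun z => ∏ i ∈ u, f i z) s := by
  classical
  induction u using Finset.induction with
  | empty => simp [differentiableOn_const]
  | @insert a u ha ih =>
    simp only [Finset.prod_insert ha]
    exact (h a (Finset.mem_insert_self _ _)).mul
      (ih fun i hi => h i (Finset.mem_insert_of_mem hi))

/-- Determinant of a matrix with differentiable entries is differentiable. -/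
lemma diffOn_det {m : ℕ} (M : ℂ → Matrix (Fin m) (Fin m) ℂ) (s : Set ℂ)
    (h : ∀ i j, DifferentiableOn ℂ (fun z => M z i j) s) :
    DifferentiableOn ℂ (fun z => (M z).det) s := by
  simp only [Matrix.det_apply']
  apply DifferentiableOn.fun_sum
  intro σ _
  exact (differentiableOn_const _).mul
    (diffOn_finset_prod _ _ _ fun i _ => h (σ i) i)

/-- Entries of the inverse of a matrix with differentiable entries and nonvanishing
determinant are differentiable. -/
lemma diffOn_inv_entry {m : ℕ} (M : ℂ → Matrix (Fin m) (Fin m) ℂ) (s : Set ℂ)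
    (h : ∀ i j, DifferentiableOn ℂ (fun z => M z i j) s)
    (hdet : ∀ z ∈ s, (M z).det ≠ 0) (i j : Fin m) :
    DifferentiableOn ℂ (fun z => (M z)⁻¹ i j) s := by
  classical
  have h1 : ∀ z : ℂ, (M z)⁻¹ i j = ((M z).det)⁻¹ * (M z).adjugate i j := by
    intro z
    rw [Matrix.inv_def, Matrix.smul_apply, Ring.inverse_eq_inv', smul_eq_mul]
  simp only [h1]
  apply DifferentiableOn.mul
  · exact (diffOn_det M s h).inv hdet
  · simp only [Matrix.adjugate_apply]
    apply diffOn_det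
    intro a b
    by_cases hab : a = j
    · subst hab
      simp only [Matrix.updateRow_self]
      exact differentiableOn_const _
    · simp only [Matrix.updateRow_ne hab]
      exact h a b

/-- Entries given by Laurent polynomials are differentiable on `ℂ∖{0}`. -/
lemma diffOn_laurent (s : Finset ℤ) (c : ℤ → ℂ) :
    DifferentiableOn ℂ (fun z : ℂ => ∑ k ∈ s, c k * z ^ k) {z : ℂ | z ≠ 0} := by
  apply DifferentiableOn.fun_sum
  intro k _
  exact (differentiableOn_const _).mul
    (differentiableOn_zpow k _ (Or.inl (by simp)))

/-- The iterated extension sequence. -/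
noncomputable def gseq6 (q : ℂ) {n p : ℕ} (A : ℂ → Matrix (Fin n) (Fin n) ℂ)
    (B : ℂ → Matrix (Fin p) (Fin p) ℂ) (F : ℂ → Matrix (Fin p) (Fin n) ℂ) :
    ℕ → ℂ → Matrix (Fin p) (Fin n) ℂ
  | 0 => F
  | (k+1) => fun z => B (z / q) * gseq6 q A B F k (z / q) * (A (z / q))⁻¹

end Aux

/-- A matrix solution `F` of the `q`-difference equation `F(qz) = B(z) F(z) A(z)⁻¹`
(with `A`, `B` invertible Laurent-polynomial matrices and `|q| > 1`), holomorphic on a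
punctured disk of radius `r` around `0`, extends holomorphically to all of `ℂ∖{0}` and
satisfies the functional equation there. -/
theorem stmt6 (q : ℂ) (hq : 1 < ‖q‖)
    (n p : ℕ) (hn : 0 < n) (hp : 0 < p)
    (A : ℂ → Matrix (Fin n) (Fin n) ℂ) (B : ℂ → Matrix (Fin p) (Fin p) ℂ)
    (hA : ∀ i j, ∃ (s : Finset ℤ) (c : ℤ → ℂ),
      ∀ z : ℂ, z ≠ 0 → A z i j = ∑ k ∈ s, c k * z ^ k)
    (hB : ∀ i j, ∃ (s : Finset ℤ) (c : ℤ → ℂ),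
      ∀ z : ℂ, z ≠ 0 → B z i j = ∑ k ∈ s, c k * z ^ k)
    (hAinv : ∀ z : ℂ, z ≠ 0 → IsUnit (A z).det)
    (hBinv : ∀ z : ℂ, z ≠ 0 → IsUnit (B z).det)
    (r : ℝ) (hr : 0 < r)
    (F : ℂ → Matrix (Fin p) (Fin n) ℂ)
    (hF : ∀ i j, DifferentiableOn ℂ (fun z => F z i j)
      {z : ℂ | 0 < ‖z‖ ∧ ‖z‖ < r})
    (hfe : ∀ z : ℂ, 0 < ‖z‖ → ‖q * z‖ < r →
      F (q * z) = B z * F z * (A z)⁻¹) :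
    ∃ G : ℂ → Matrix (Fin p) (Fin n) ℂ,
      (∀ i j, DifferentiableOn ℂ (fun z => G z i j) {z : ℂ | z ≠ 0}) ∧
      (∀ z : ℂ, 0 < ‖z‖ → ‖z‖ < r → G z = F z) ∧
      (∀ z : ℂ, z ≠ 0 → G (q * z) = B z * G z * (A z)⁻¹) := by
  classical
  have hq0 : q ≠ 0 := by
    intro h; rw [h] at hq; simp at hq; linarith
  have habsq : (0:ℝ) < ‖q‖ := lt_trans one_pos hq
  set g := gseq6 q A B F with hg
  -- entrywise differentiability of A, B on ℂ∖{0}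
  have hAd : ∀ i j, DifferentiableOn ℂ (fun z => A z i j) {z : ℂ | z ≠ 0} := by
    intro i j
    obtain ⟨s, c, hc⟩ := hA i j
    exact (diffOn_laurent s c).congr fun z hz => hc z hz
  have hBd : ∀ i j, DifferentiableOn ℂ (fun z => B z i j) {z : ℂ | z ≠ 0} := by
    intro i j
    obtain ⟨s, c, hc⟩ := hB i j
    exact (diffOn_laurent s c).congr fun z hz => hc z hz
  have hAdet : ∀ z ∈ {z : ℂ | z ≠ 0}, (A z).det ≠ 0 := by
    intro z hz; exact (hAinv z hz).ne_zero
  have hAinvd : ∀ i j, DifferentiableOn ℂ (fun z => (A z)⁻¹ i j) {z : ℂ | z ≠ 0} :=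
    fun i j => diffOn_inv_entry A _ hAd hAdet i j
  -- stepping lemma
  have hstep : ∀ k, ∀ z : ℂ, 0 < ‖z‖ →
      ‖z‖ < r * ‖q‖ ^ k → g (k+1) z = g k z := by
    intro k
    induction k with
    | zero =>
      intro z hz hzr
      have hzne : z ≠ 0 := by
        intro h; rw [h] at hz; simp at hz
      have hz' : 0 < ‖z / q‖ := by
        rw [norm_div]; exact div_pos hz habsq
      have hq' : ‖q * (z / q)‖ < r := by
        rw [mul_div_cancel₀ _ hq0]
        simpa using hzr
      have := hfe (z / q) hz' hq'
      rw [mul_div_cancel₀ _ hq0] at this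
      simpa [hg, gseq6] using this.symm
    | succ k ih =>
      intro z hz hzr
      have hz' : 0 < ‖z / q‖ := by
        rw [norm_div]; exact div_pos hz habsq
      have hzr' : ‖z / q‖ < r * ‖q‖ ^ k := by
        rw [norm_div, div_lt_iff₀ habsq]
        calc ‖z‖ < r * ‖q‖ ^ (k+1) := hzr
          _ = r * ‖q‖ ^ k * ‖q‖ := by ring
      show g (k+2) z = g (k+1) z
      rw [show g (k+2) z = B (z/q) * g (k+1) (z/q) * (A (z/q))⁻¹ from rfl,
        ih (z / q) hz' hzr']
      rfl
  -- monotone agreement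
  have hagree : ∀ k m, k ≤ m → ∀ z : ℂ, 0 < ‖z‖ →
      ‖z‖ < r * ‖q‖ ^ k → g m z = g k z := by
    intro k m hkm
    induction m, hkm using Nat.le_induction with
    | base => intro z _ _; rfl
    | succ m hkm ih =>
      intro z hz hzr
      have hzr' : ‖z‖ < r * ‖q‖ ^ m := by
        refine lt_of_lt_of_le hzr ?_
        apply mul_le_mul_of_nonneg_left _ hr.le
        exact pow_le_pow_right₀ hq.le hkm
      rw [hstep m z hz hzr', ih z hz hzr]
  -- differentiability of g k
  have hSopen : ∀ c : ℝ, IsOpen {z : ℂ | 0 < ‖z‖ ∧ ‖z‖ < c} := by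
    intro c
    have : {z : ℂ | 0 < ‖z‖ ∧ ‖z‖ < c}
        = ((fun w : ℂ => ‖w‖) ⁻¹' (Set.Ioi 0)) ∩ ((fun w : ℂ => ‖w‖) ⁻¹' (Set.Iio c)) := by
      ext z; simp [Set.mem_setOf_eq]
    rw [this]
    exact (isOpen_Ioi.preimage continuous_norm).inter
      (isOpen_Iio.preimage continuous_norm)
  have hdiff : ∀ k i j, DifferentiableOn ℂ (fun z => g k z i j)
      {z : ℂ | 0 < ‖z‖ ∧ ‖z‖ < r * ‖q‖ ^ k} := by
    intro k
    induction k with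
    | zero => simpa [hg, gseq6] using hF
    | succ k ih =>
      intro i j
      have hdivd : DifferentiableOn ℂ (fun z : ℂ => z / q)
          {z : ℂ | 0 < ‖z‖ ∧ ‖z‖ < r * ‖q‖ ^ (k+1)} :=
        (differentiable_id.div_const q).differentiableOn
      have hmaps0 : Set.MapsTo (fun z : ℂ => z / q)
          {z : ℂ | 0 < ‖z‖ ∧ ‖z‖ < r * ‖q‖ ^ (k+1)}
          {z : ℂ | z ≠ 0} := by
        intro z hz
        simp only [Set.mem_setOf_eq] at hz ⊢
        intro h
        rw [div_eq_zero_iff] at h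
        rcases h with h | h
        · rw [h] at hz; simp at hz
        · exact hq0 h
      have hmaps1 : Set.MapsTo (fun z : ℂ => z / q)
          {z : ℂ | 0 < ‖z‖ ∧ ‖z‖ < r * ‖q‖ ^ (k+1)}
          {z : ℂ | 0 < ‖z‖ ∧ ‖z‖ < r * ‖q‖ ^ k} := by
        intro z hz
        simp only [Set.mem_setOf_eq, norm_div] at hz ⊢
        constructor
        · exact div_pos hz.1 habsq
        · rw [div_lt_iff₀ habsq]
          calc ‖z‖ < r * ‖q‖ ^ (k+1) := hz.2
            _ = r * ‖q‖ ^ k * ‖q‖ := by ring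
      show DifferentiableOn ℂ (fun z => gseq6 q A B F (k+1) z i j) _
      simp only [gseq6, Matrix.mul_apply]
      apply DifferentiableOn.fun_sum
      intro b _
      apply DifferentiableOn.mul
      · apply DifferentiableOn.fun_sum
        intro a _
        apply DifferentiableOn.mul
        · exact (hBd i a).comp hdivd hmaps0
        · exact (ih a b).comp hdivd hmaps1
      · exact (hAinvd b j).comp hdivd hmaps0
  -- choice of index
  have hex : ∀ z : ℂ, ∃ k : ℕ, ‖z‖ < r * ‖q‖ ^ k := by
    intro z
    obtain ⟨k, hk⟩ := pow_unbounded_of_one_lt (‖z‖ / r) hq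
    exact ⟨k, by rwa [div_lt_iff₀ hr, mul_comm] at hk⟩
  choose N hN using hex
  refine ⟨fun z => g (N z) z, ?_, ?_, ?_⟩
  · -- differentiability
    intro i j z hz
    simp only [Set.mem_setOf_eq] at hz
    set k := N z with hk
    have hzk : ‖z‖ < r * ‖q‖ ^ k := hN z
    have hz0 : 0 < ‖z‖ := norm_pos_iff.mpr hz
    have hmem : z ∈ {w : ℂ | 0 < ‖w‖ ∧ ‖w‖ < r * ‖q‖ ^ k} :=
      ⟨hz0, hzk⟩
    have hda : DifferentiableAt ℂ (fun w => g k w i j) z :=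
      (hdiff k i j).differentiableAt (((hSopen _).mem_nhds hmem))
    have heq : (fun w => g (N w) w i j) =ᶠ[nhds z] (fun w => g k w i j) := by
      filter_upwards [(hSopen (r * ‖q‖ ^ k)).mem_nhds hmem] with w hw
      rcases le_total (N w) k with h | h
      · rw [hagree (N w) k h w hw.1 (hN w)]
      · rw [hagree k (N w) h w hw.1 hw.2]
    exact (hda.congr_of_eventuallyEq heq).differentiableWithinAt
  · -- agreement with F
    intro z hz hzr
    show g (N z) z = F z
    have : g (N z) z = g 0 z := by
      apply hagree 0 (N z) (Nat.zero_le _) z hz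
      simpa using hzr
    rw [this]; rfl
  · -- functional equation
    intro z hz
    have hz0 : 0 < ‖z‖ := by
      simp only [norm_pos_iff]; exact hz
    set k := N z with hk
    have hzk : ‖z‖ < r * ‖q‖ ^ k := hN z
    have hqz0 : 0 < ‖q * z‖ := by
      rw [norm_mul]; exact mul_pos habsq hz0
    have hqzk : ‖q * z‖ < r * ‖q‖ ^ (k+1) := by
      rw [norm_mul]
      calc ‖q‖ * ‖z‖ < ‖q‖ * (r * ‖q‖ ^ k) :=
            (mul_lt_mul_iff_right₀ habsq).mpr hzk
        _ = r * ‖q‖ ^ (k+1) := by ring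
    have h1 : g (N (q * z)) (q * z) = g (k+1) (q * z) := by
      rcases le_total (N (q * z)) (k+1) with h | h
      · rw [hagree (N (q*z)) (k+1) h (q*z) hqz0 (hN (q*z))]
      · rw [hagree (k+1) (N (q*z)) h (q*z) hqz0 hqzk]
    show g (N (q*z)) (q*z) = B z * g k z * (A z)⁻¹
    rw [h1]
    rw [show g (k+1) (q*z) = B ((q*z)/q) * g k ((q*z)/q) * (A ((q*z)/q))⁻¹ from rfl,
      mul_comm q z, mul_div_assoc, div_self hq0, mul_one]
end

section
/- Let q ∈ ℂ with |q| > 1 and r > 0. If f is a complex-valued function holomorphic on the punctured disk {z ∈ ℂ : 0 < |z| < r} and satisfies f(qz) = f(z) for every z with 0 < |z| and |qz| < r, then there exists a function g holomorphic on all of ℂ∖{0} such that g(z) = f(z) for 0 < |z| < r and g(qz) = g(z) for every z ≠ 0. -/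
/-- A holomorphic function on a punctured disk around `0` invariant under `z ↦ qz`
(with `|q| > 1`) extends to a `σ_q`-invariant holomorphic function on all of `ℂ∖{0}`. -/
theorem stmt7 (q : ℂ) (hq : 1 < ‖q‖) (r : ℝ) (hr : 0 < r)
    (f : ℂ → ℂ)
    (hf : DifferentiableOn ℂ f {z : ℂ | 0 < ‖z‖ ∧ ‖z‖ < r})
    (hfe : ∀ z : ℂ, 0 < ‖z‖ → ‖q * z‖ < r → f (q * z) = f z) :
    ∃ g : ℂ → ℂ,
      DifferentiableOn ℂ g {z : ℂ | z ≠ 0} ∧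
      (∀ z : ℂ, 0 < ‖z‖ → ‖z‖ < r → g z = f z) ∧
      (∀ z : ℂ, z ≠ 0 → g (q * z) = g z) := by
  have hq0 : q ≠ 0 := by
    intro h; rw [h] at hq; simp at hq; linarith
  have hq1 : (1:ℝ) ≤ ‖q‖ := le_of_lt hq
  have habs : ∀ (z : ℂ) (n : ℕ), ‖z / q ^ n‖
      = ‖z‖ / (‖q‖) ^ n := by
    intro z n; rw [norm_div, norm_pow]
  -- monotonicity in n
  have hmono : ∀ (z : ℂ) (m k : ℕ),
      ‖z / q ^ (m + k)‖ ≤ ‖z / q ^ m‖ := by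
    intro z m k
    rw [habs, habs]
    apply div_le_div_of_nonneg_left (norm_nonneg z)
    · positivity
    · exact pow_le_pow_right₀ hq1 (Nat.le_add_right m k)
  -- key: the value f (z/q^n) does not depend on n once small
  have key : ∀ (z : ℂ), z ≠ 0 → ∀ (m k : ℕ), ‖z / q ^ m‖ < r →
      f (z / q ^ (m + k)) = f (z / q ^ m) := by
    intro z hz m k hm
    induction k with
    | zero => rfl
    | succ k ih =>
      have hne : z / q ^ (m + k + 1) ≠ 0 := by
        simp [div_eq_zero_iff, hz, pow_eq_zero_iff, hq0]
      have hstep : f (q * (z / q ^ (m + k + 1))) = f (z / q ^ (m + k + 1)) := by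
        apply hfe
        · exact norm_pos_iff.mpr hne
        · have : q * (z / q ^ (m + k + 1)) = z / q ^ (m + k) := by
            field_simp; ring
          rw [this]
          exact lt_of_le_of_lt (hmono z m k) hm
      have heq : q * (z / q ^ (m + k + 1)) = z / q ^ (m + k) := by
        field_simp; ring
      rw [heq] at hstep
      have : f (z / q ^ (m + (k + 1))) = f (z / q ^ (m + k)) := by
        rw [show m + (k + 1) = m + k + 1 from rfl, ← hstep]
      rw [this, ih]
  have key2 : ∀ (z : ℂ), z ≠ 0 → ∀ (m n : ℕ), ‖z / q ^ m‖ < r →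
      ‖z / q ^ n‖ < r → f (z / q ^ m) = f (z / q ^ n) := by
    intro z hz m n hm hn
    have h1 := key z hz m (max m n - m) hm
    have h2 := key z hz n (max m n - n) hn
    rw [Nat.add_sub_cancel' (le_max_left m n)] at h1
    rw [Nat.add_sub_cancel' (le_max_right m n)] at h2
    rw [← h1, ← h2]
  -- existence of suitable n
  have hex : ∀ z : ℂ, ∃ n : ℕ, ‖z / q ^ n‖ < r := by
    intro z
    obtain ⟨n, hn⟩ := pow_unbounded_of_one_lt (‖z‖ / r) hq
    refine ⟨n, ?_⟩
    rw [habs, div_lt_iff₀ (by positivity)]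
    rw [div_lt_iff₀ hr] at hn
    linarith
  classical
  set N : ℂ → ℕ := fun z => Classical.choose (hex z) with hN
  have hNspec : ∀ z, ‖z / q ^ (N z)‖ < r := fun z =>
    Classical.choose_spec (hex z)
  set g : ℂ → ℂ := fun z => f (z / q ^ (N z)) with hg
  have gspec : ∀ (z : ℂ), z ≠ 0 → ∀ n : ℕ, ‖z / q ^ n‖ < r →
      g z = f (z / q ^ n) := fun z hz n hn => key2 z hz (N z) n (hNspec z) hn
  -- openness of the punctured disk
  have hSopen : IsOpen {z : ℂ | 0 < ‖z‖ ∧ ‖z‖ < r} := by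
    have : {z : ℂ | 0 < ‖z‖ ∧ ‖z‖ < r}
        = (fun z : ℂ => ‖z‖) ⁻¹' (Set.Ioo 0 r) := rfl
    rw [this]
    exact isOpen_Ioo.preimage continuous_norm
  refine ⟨g, ?_, ?_, ?_⟩
  · intro z0 hz0
    simp only [Set.mem_setOf_eq] at hz0
    obtain ⟨n, hn⟩ := hex z0
    have hU : IsOpen {z : ℂ | z ≠ 0 ∧ ‖z / q ^ n‖ < r} := by
      have : {z : ℂ | z ≠ 0 ∧ ‖z / q ^ n‖ < r}
          = {(0:ℂ)}ᶜ ∩ (fun z => z / q ^ n) ⁻¹' ((fun z : ℂ => ‖z‖) ⁻¹' (Set.Iio r)) := by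
        ext z; simp [Set.mem_setOf_eq]
      rw [this]
      exact (isOpen_compl_singleton).inter
        ((isOpen_Iio.preimage continuous_norm).preimage (by fun_prop))
    have hmem : z0 ∈ {z : ℂ | z ≠ 0 ∧ ‖z / q ^ n‖ < r} := ⟨hz0, hn⟩
    have hdiff : DifferentiableAt ℂ (fun z => f (z / q ^ n)) z0 := by
      have hz0n : z0 / q ^ n ∈ {z : ℂ | 0 < ‖z‖ ∧ ‖z‖ < r} := by
        constructor
        · simp [norm_pos_iff, div_eq_zero_iff, hz0, pow_eq_zero_iff, hq0]
        · exact hn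
      have hfd : DifferentiableAt ℂ f (z0 / q ^ n) :=
        (hf.differentiableAt (hSopen.mem_nhds hz0n))
      exact hfd.comp z0 (by fun_prop)
    have hev : g =ᶠ[nhds z0] (fun z => f (z / q ^ n)) := by
      filter_upwards [hU.mem_nhds hmem] with z hz
      exact gspec z hz.1 n hz.2
    exact (hdiff.congr_of_eventuallyEq hev).differentiableWithinAt
  · intro z hz1 hz2
    have hz : z ≠ 0 := by simpa [norm_pos_iff] using hz1
    have : ‖z / q ^ 0‖ < r := by simpa using hz2
    have := gspec z hz 0 this
    simpa using this
  · intro z hz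
    obtain ⟨n, hn⟩ := hex z
    have hqz : q * z ≠ 0 := mul_ne_zero hq0 hz
    have h1 : ‖(q * z) / q ^ (n + 1)‖ < r := by
      have : (q * z) / q ^ (n + 1) = z / q ^ n := by field_simp; ring
      rw [this]; exact hn
    have e1 := gspec (q * z) hqz (n + 1) h1
    have e2 := gspec z hz n hn
    rw [e1, e2]
    congr 1
    field_simp; ring
end

section
/- Let q ∈ ℂˣ with |q| > 1. Then there exist a ℚ-vector space L and an isomorphism of abelian groups between ℂˣ/q^ℤ and the product (ℚ/ℤ) × (ℚ/ℤ) × L (where the right-hand side carries the additive group structure). -/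
open Complex Real

private lemma aux_complex (x y z w : ℝ) :
    (x:ℂ) + y*(2*π*I) = (z:ℂ) + w*(2*π*I) ↔ x = z ∧ y = w := by
  rw [Complex.ext_iff]
  simp [Complex.add_re, Complex.add_im, Real.pi_ne_zero, mul_comm]

private lemma exp_polar (u : ℂˣ) :
    Complex.exp ((Real.log (‖(u:ℂ)‖) : ℂ) +
      ((Complex.arg (u:ℂ) / (2*π) : ℝ) : ℂ) * (2*π*I)) = (u:ℂ) := by
  have h2π : (2*π:ℝ) ≠ 0 := by positivity
  have h1 : ((Complex.arg (u:ℂ) / (2*π) : ℝ) : ℂ) * (2*π*I) = Complex.arg (u:ℂ) * I := by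
    have h2πc : (2*(π:ℂ)) ≠ 0 := by exact_mod_cast Complex.ofReal_ne_zero.2 h2π
    push_cast
    field_simp
  rw [h1, Complex.exp_add, ← Complex.ofReal_exp,
    Real.exp_log (by simpa using u.ne_zero), norm_mul_exp_arg_mul_I]

private lemma real_decomp : ∃ (V : Type) (_ : AddCommGroup V) (_ : Module ℚ V),
    Nonempty ((ℝ ⧸ AddSubgroup.zmultiples (1:ℝ)) ≃+ (ℚ ⧸ AddSubgroup.zmultiples (1:ℚ)) × V) := by
  obtain ⟨V, hV⟩ := Submodule.exists_isCompl (ℚ ∙ (1:ℝ))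
  refine ⟨V, inferInstance, inferInstance, ?_⟩
  let f := (LinearEquiv.prodCongr (LinearEquiv.toSpanNonzeroSingleton ℚ ℝ 1 one_ne_zero)
      (LinearEquiv.refl ℚ V)).trans (Submodule.prodEquivOfIsCompl _ _ hV)
  have hf : ∀ r : ℚ, ∀ v : V, f (r, v) = r • (1:ℝ) + v := fun r v => rfl
  let g : ℝ →+ (ℚ ⧸ AddSubgroup.zmultiples (1:ℚ)) × V :=
    ((QuotientAddGroup.mk' (AddSubgroup.zmultiples (1:ℚ))).prodMap
      (AddMonoidHom.id V)).comp f.symm.toLinearMap.toAddMonoidHom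
  have hg : ∀ x : ℝ, g x = (QuotientAddGroup.mk (f.symm x).1, (f.symm x).2) := fun x => rfl
  have hgsurj : Function.Surjective g := by
    rintro ⟨x, v⟩
    obtain ⟨r, rfl⟩ := QuotientAddGroup.mk_surjective x
    exact ⟨f (r, v), by rw [hg]; simp⟩
  have hker : g.ker = AddSubgroup.zmultiples (1:ℝ) := by
    ext x
    rw [AddMonoidHom.mem_ker, AddSubgroup.mem_zmultiples_iff, hg, Prod.ext_iff]
    constructor
    · rintro ⟨h1, h2⟩
      simp only [Prod.fst_zero, Prod.snd_zero] at h1 h2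
      rw [QuotientAddGroup.eq_zero_iff, AddSubgroup.mem_zmultiples_iff] at h1
      obtain ⟨n, hn⟩ := h1
      refine ⟨n, ?_⟩
      have hx : f.symm x = ((n : ℚ), (0 : V)) := Prod.ext (by simpa using hn.symm) h2
      have := f.apply_symm_apply x
      rw [hx, hf] at this
      rw [← this]
      push_cast
      simp
    · rintro ⟨n, rfl⟩
      have hx : f.symm ((n • (1:ℝ))) = ((n : ℚ), (0 : V)) := by
        rw [LinearEquiv.symm_apply_eq, hf]
        push_cast
        simp
      rw [hx]
      refine ⟨?_, rfl⟩
      simp only [Prod.fst_zero, Prod.snd_zero]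
      rw [QuotientAddGroup.eq_zero_iff, AddSubgroup.mem_zmultiples_iff]
      exact ⟨n, by simp⟩
  exact ⟨(QuotientAddGroup.quotientAddEquivOfEq hker.symm).trans
    (QuotientAddGroup.quotientKerEquivOfSurjective g hgsurj)⟩

set_option maxHeartbeats 4000000 in
/-- For `|q| > 1`, the group `E_q = ℂˣ/q^ℤ` is isomorphic (as an abelian group) to
`(ℚ/ℤ) × (ℚ/ℤ) × L` for some ℚ-vector space `L`. -/
theorem stmt9 (q : ℂˣ) (hq : 1 < ‖(q : ℂ)‖) :
    ∃ (L : Type) (_ : AddCommGroup L) (_ : Module ℚ L),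
      Nonempty (Additive (ℂˣ ⧸ Subgroup.zpowers q) ≃+
        ((ℚ ⧸ AddSubgroup.zmultiples (1 : ℚ)) ×
          (ℚ ⧸ AddSubgroup.zmultiples (1 : ℚ)) × L)) := by
  set a : ℝ := Real.log (‖(q:ℂ)‖) with ha_def
  have ha : 0 < a := Real.log_pos hq
  set θ : ℝ := Complex.arg (q:ℂ) / (2*π) with hθ_def
  have hqexp : Complex.exp ((a:ℂ) + (θ:ℂ) * (2*π*I)) = (q:ℂ) := exp_polar q
  have hne : ∀ p : ℝ × ℝ, Complex.exp ((p.1:ℂ) + (p.2:ℂ)*(2*π*I)) ≠ 0 :=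
    fun p => Complex.exp_ne_zero _
  let E : ℝ × ℝ → ℂˣ := fun p => Units.mk0 _ (hne p)
  have hE : ∀ p, (E p : ℂ) = Complex.exp ((p.1:ℂ) + (p.2:ℂ)*(2*π*I)) := fun p => rfl
  let σ : ℝ × ℝ →+ Additive (ℂˣ ⧸ Subgroup.zpowers q) :=
  { toFun := fun p => Additive.ofMul (QuotientGroup.mk (E p))
    map_zero' := by
      have : E 0 = 1 := by
        ext
        rw [hE]
        simp
      simp [this]
    map_add' := by
      intro p p'
      have : E (p + p') = E p * E p' := by
        ext
        rw [Units.val_mul, hE, hE, hE, ← Complex.exp_add]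
        congr 1
        push_cast [Prod.fst_add, Prod.snd_add]
        ring
      simp [this] }
  have hσ : Function.Surjective σ := by
    intro z
    obtain ⟨u, hu⟩ := QuotientGroup.mk_surjective (Additive.toMul z)
    refine ⟨(Real.log (‖(u:ℂ)‖), Complex.arg (u:ℂ) / (2*π)), ?_⟩
    have hEu : E (Real.log (‖(u:ℂ)‖), Complex.arg (u:ℂ) / (2*π)) = u := by
      ext
      rw [hE]
      exact exp_polar u
    show Additive.ofMul (QuotientGroup.mk (E _)) = z
    rw [hEu, hu]
    rfl
  have hker_char : ∀ p : ℝ × ℝ, σ p = 0 ↔ ∃ n : ℤ, ∃ m : ℤ, p.1 = n * a ∧ p.2 = n * θ + m := by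
    intro p
    have : σ p = 0 ↔ (QuotientGroup.mk (E p) : ℂˣ ⧸ Subgroup.zpowers q) = 1 := Iff.rfl
    rw [this, QuotientGroup.eq_one_iff, Subgroup.mem_zpowers_iff]
    constructor
    · rintro ⟨n, hn⟩
      have hval : ((q:ℂ))^n = Complex.exp ((p.1:ℂ) + (p.2:ℂ)*(2*π*I)) := by
        rw [← hE]
        exact_mod_cast congrArg Units.val hn
      rw [← hqexp, ← Complex.exp_int_mul, eq_comm, Complex.exp_eq_exp_iff_exists_int] at hval
      obtain ⟨m, hm⟩ := hval
      have hm' : (p.1:ℂ) + (p.2:ℂ)*(2*π*I) = ((n*a : ℝ):ℂ) + ((n*θ + m : ℝ):ℂ)*(2*π*I) := by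
        rw [hm]; push_cast; ring
      rw [aux_complex] at hm'
      exact ⟨n, m, hm'.1, hm'.2⟩
    · rintro ⟨n, m, h1, h2⟩
      refine ⟨n, ?_⟩
      ext
      rw [Units.val_zpow_eq_zpow_val, hE, ← hqexp, ← Complex.exp_int_mul, eq_comm,
        Complex.exp_eq_exp_iff_exists_int]
      exact ⟨m, by rw [h1, h2]; push_cast; ring⟩
  -- the comparison homomorphism onto (ℝ/ℤ)²
  let τ : ℝ × ℝ →+ (ℝ ⧸ AddSubgroup.zmultiples (1:ℝ)) × (ℝ ⧸ AddSubgroup.zmultiples (1:ℝ)) :=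
  { toFun := fun p => (QuotientAddGroup.mk (p.1/a), QuotientAddGroup.mk (p.2 - p.1*θ/a))
    map_zero' := by simp
    map_add' := by
      intro p p'
      refine Prod.ext ?_ ?_ <;>
        · show QuotientAddGroup.mk _ = QuotientAddGroup.mk _ + QuotientAddGroup.mk _
          rw [← QuotientAddGroup.mk_add]
          congr 1
          push_cast [Prod.fst_add, Prod.snd_add]
          ring }
  have hτval : ∀ p : ℝ × ℝ, τ p =
      (QuotientAddGroup.mk (p.1/a), QuotientAddGroup.mk (p.2 - p.1*θ/a)) := fun p => rfl
  have hτ : Function.Surjective τ := by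
    rintro ⟨x, y⟩
    obtain ⟨x0, rfl⟩ := QuotientAddGroup.mk_surjective x
    obtain ⟨y0, rfl⟩ := QuotientAddGroup.mk_surjective y
    refine ⟨(a*x0, y0 + x0*θ), ?_⟩
    rw [hτval]
    refine Prod.ext ?_ ?_ <;> · dsimp only; congr 1; field_simp; try ring
  have hkτ : σ.ker = τ.ker := by
    ext p
    rw [AddMonoidHom.mem_ker, AddMonoidHom.mem_ker, hker_char, hτval, Prod.ext_iff]
    simp only [Prod.fst_zero, Prod.snd_zero, QuotientAddGroup.eq_zero_iff,
      AddSubgroup.mem_zmultiples_iff, zsmul_eq_mul, mul_one]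
    constructor
    · rintro ⟨n, m, h1, h2⟩
      constructor
      · exact ⟨n, by rw [h1]; field_simp⟩
      · exact ⟨m, by rw [h1, h2]; field_simp; ring⟩
    · rintro ⟨⟨n, hn⟩, ⟨m, hm⟩⟩
      have h1 : p.1 = n * a := by
        rw [eq_comm, div_eq_iff ha.ne'] at hn
        linarith [hn]
      refine ⟨n, m, h1, ?_⟩
      rw [h1] at hm
      have : (n:ℝ) * a * θ / a = n * θ := by field_simp
      rw [this] at hm
      linarith [hm]
  -- assemble everything
  clear_value σ τ
  clear hE hτval hker_char hqexp E
  clear_value a θ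
  clear ha ha_def hθ_def hne hq a θ
  obtain ⟨V, instV1, instV2, ⟨e⟩⟩ := real_decomp
  refine ⟨V × V, inferInstance, inferInstance, ?_⟩
  let ea := (QuotientAddGroup.quotientKerEquivOfSurjective (H := Additive (ℂˣ ⧸ Subgroup.zpowers q)) σ hσ).symm
  let eb := QuotientAddGroup.quotientAddEquivOfEq hkτ
  let ec := QuotientAddGroup.quotientKerEquivOfSurjective τ hτ
  let e1 := ea.trans (eb.trans ec)
  let e2 := AddEquiv.prodCongr e e
  let e3 : ((ℚ ⧸ AddSubgroup.zmultiples (1:ℚ)) × V) × ((ℚ ⧸ AddSubgroup.zmultiples (1:ℚ)) × V) ≃+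
      ((ℚ ⧸ AddSubgroup.zmultiples (1:ℚ)) × (ℚ ⧸ AddSubgroup.zmultiples (1:ℚ)) × (V × V)) :=
  { toFun := fun x => (x.1.1, x.2.1, (x.1.2, x.2.2))
    invFun := fun x => ((x.1, x.2.2.1), (x.2.1, x.2.2.2))
    left_inv := fun _ => rfl
    right_inv := fun _ => rfl
    map_add' := fun _ _ => rfl }
  exact ⟨e1.trans (e2.trans e3)⟩
end

section
/- Let q ∈ ℂˣ with |q| > 1, let p₁, p₂ be positive integers and ν a nonnegative integer. Then there exists a surjective group homomorphism from Hom(ℂˣ/q^ℤ, ℂˣ) (the group of all abstract group homomorphisms ℂˣ/q^ℤ → ℂˣ, under pointwise multiplication) onto (ℤ/p₁ℤ) × (ℤ/p₂ℤ) × (ℂˣ)^ν. -/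
open Complex Polynomial

noncomputable section

namespace Stmt10


noncomputable instance : RootableBy ℂˣ ℕ :=
  rootableByOfPowLeftSurj _ _ (fun {n} hn z => by
    have key : ((z : ℂ) ^ ((n : ℂ)⁻¹)) ^ n = (z : ℂ) := Complex.cpow_nat_inv_pow _ hn
    have hne : ((z : ℂ) ^ ((n : ℂ)⁻¹)) ≠ 0 := by
      intro h
      rw [h, zero_pow hn] at key
      exact z.ne_zero key.symm
    refine ⟨Units.mk0 _ hne, ?_⟩
    ext
    push_cast
    exact key)

noncomputable instance : RootableBy ℂˣ ℤ := Group.rootableByIntOfRootableByNat ℂˣ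

noncomputable instance : DivisibleBy (Additive ℂˣ) ℤ where
  div a n := Additive.ofMul (RootableBy.root a.toMul n)
  div_zero a := congrArg Additive.ofMul (RootableBy.root_zero a.toMul)
  div_cancel a hn := by
    apply Additive.toMul.injective
    rw [toMul_zsmul]
    exact RootableBy.root_cancel _ hn



variable {p₁ p₂ ν : ℕ} [NeZero p₁] [NeZero p₂] {G : Type*} [CommGroup G]

/-- third component: `w ↦ ∏ i, bb i ^ w i` as an additive hom. -/
def piHom (bb : Fin ν → G) : (Fin ν → ℤ) →+ Additive G :=
  AddMonoidHom.mk' (fun w => Additive.ofMul (∏ i, bb i ^ w i)) (by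
    intro w w'
    show Additive.ofMul (∏ i, bb i ^ (w i + w' i)) = _
    rw [← ofMul_mul, ← Finset.prod_mul_distrib]
    exact congrArg _ (Finset.prod_congr rfl fun i _ => zpow_add _ _ _))

def cycHom (c : G) {p : ℕ} (h : c ^ p = 1) : ZMod p →+ Additive G :=
  ZMod.lift p ⟨zmultiplesHom (Additive G) (Additive.ofMul c), by
    apply Additive.toMul.injective
    rw [zmultiplesHom_apply, toMul_zsmul]
    simpa using h⟩

lemma cycHom_coe (c : G) {p : ℕ} (h : c ^ p = 1) (n : ℤ) :
    cycHom c h ((n : ℤ) : ZMod p) = Additive.ofMul (c ^ n) := by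
  rw [cycHom, ZMod.lift_coe]
  apply Additive.toMul.injective
  rw [zmultiplesHom_apply, toMul_zsmul]
  rfl

/-- The hom `(u,v,w) ↦ c₁^u * c₂^v * ∏ bb i ^ w i`. -/
def mkHom (c₁ c₂ : G) (bb : Fin ν → G) (h₁ : c₁ ^ p₁ = 1) (h₂ : c₂ ^ p₂ = 1) :
    (ZMod p₁ × ZMod p₂ × (Fin ν → ℤ)) →+ Additive G :=
  (cycHom c₁ h₁).comp (AddMonoidHom.fst _ _)
    + ((cycHom c₂ h₂).comp (AddMonoidHom.fst _ _)).comp (AddMonoidHom.snd _ _)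
    + ((piHom bb).comp (AddMonoidHom.snd _ _)).comp (AddMonoidHom.snd _ _)

lemma mkHom_apply (c₁ c₂ : G) (bb : Fin ν → G) (h₁ : c₁ ^ p₁ = 1) (h₂ : c₂ ^ p₂ = 1)
    (u : ZMod p₁) (v : ZMod p₂) (w : Fin ν → ℤ) :
    mkHom c₁ c₂ bb h₁ h₂ (u, v, w)
      = Additive.ofMul (c₁ ^ (u.val : ℤ) * c₂ ^ (v.val : ℤ) * ∏ i, bb i ^ w i) := by
  have hu : (((u.val : ℤ) : ℤ) : ZMod p₁) = u := by
    push_cast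
    exact ZMod.natCast_rightInverse u
  have hv : (((v.val : ℤ) : ℤ) : ZMod p₂) = v := by
    push_cast
    exact ZMod.natCast_rightInverse v
  have h0 : mkHom c₁ c₂ bb h₁ h₂ (u, v, w)
      = cycHom c₁ h₁ u + cycHom c₂ h₂ v + piHom bb w := rfl
  have e1 : cycHom c₁ h₁ u = Additive.ofMul (c₁ ^ (u.val : ℤ)) := by
    conv_lhs => rw [← hu]
    exact cycHom_coe _ _ _
  have e2 : cycHom c₂ h₂ v = Additive.ofMul (c₂ ^ (v.val : ℤ)) := by
    conv_lhs => rw [← hv]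
    exact cycHom_coe _ _ _
  rw [h0, e1, e2]
  apply Additive.toMul.injective
  simp only [toMul_add, toMul_ofMul]
  rfl



def θ : ℝ := liouvilleNumber 3

lemma θ_trans : Transcendental ℤ θ := transcendental_liouvilleNumber (by norm_num)

def bval (q : ℂˣ) (i : ℕ) : ℝ := ‖(q : ℂ)‖ ^ (θ ^ (i + 1))

lemma bval_pos {q : ℂˣ} (hq : 1 < ‖(q : ℂ)‖) (i : ℕ) : 0 < bval q i :=
  Real.rpow_pos_of_pos (by linarith) _

def bunit (q : ℂˣ) (hq : 1 < ‖(q : ℂ)‖) (i : ℕ) : ℂˣ :=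
  Units.mk0 ((bval q i : ℝ) : ℂ) (by exact_mod_cast (bval_pos hq i).ne')

lemma indep (q : ℂˣ) (hq : 1 < ‖(q : ℂ)‖) {p₁ p₂ : ℕ} (hp₁ : 0 < p₁) (hp₂ : 0 < p₂)
    {ν : ℕ} (ζ₁ a₂ : ℂˣ) (hζ₁ : IsPrimitiveRoot ζ₁ p₁) (ha₂ : (a₂ : ℂ) ^ p₂ = (q : ℂ))
    (w : Fin ν → ℤ) (j k : ℕ) (hj : j < p₁) (hk : k < p₂) (m : ℤ)
    (heq : ζ₁ ^ (j : ℤ) * a₂ ^ (k : ℤ) * ∏ i : Fin ν, (bunit q hq i) ^ w i = q ^ m) :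
    j = 0 ∧ k = 0 ∧ w = 0 := by
  have hr0 : (0 : ℝ) < ‖(q : ℂ)‖ := by linarith
  -- push the equation to ℂ
  have heqC : (ζ₁ : ℂ) ^ (j : ℤ) * (a₂ : ℂ) ^ (k : ℤ) * ∏ i : Fin ν, ((bunit q hq i : ℂ)) ^ w i
      = (q : ℂ) ^ m := by
    have := congrArg (Units.val) heq
    push_cast at this
    convert this using 2
  -- absolute values
  have habs : ‖(a₂ : ℂ)‖ ^ (k : ℤ) * ∏ i : Fin ν, (bval q (i : ℕ)) ^ w i
      = ‖(q : ℂ)‖ ^ m := by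
    have h1 : ‖(ζ₁ : ℂ)‖ = 1 := by
      apply Complex.norm_eq_one_of_pow_eq_one (n := p₁) _ hp₁.ne'
      have h2 : ((ζ₁ ^ p₁ : ℂˣ) : ℂ) = 1 := by rw [hζ₁.pow_eq_one]; rfl
      simpa using h2
    have hb : ∀ i : Fin ν, ‖(bunit q hq (i : ℕ) : ℂ)‖ = bval q (i : ℕ) := fun i => by
      simp only [bunit, Units.val_mk0, Complex.norm_real, Real.norm_eq_abs]
      exact abs_of_pos (bval_pos hq i)
    have h3 := congrArg (‖·‖) heqC
    simp only [norm_mul, norm_zpow, norm_prod, h1, one_zpow, one_mul, hb] at h3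
    exact h3
  have ht0 : 0 < ‖(a₂ : ℂ)‖ := norm_pos_iff.mpr a₂.ne_zero
  have htp : ‖(a₂ : ℂ)‖ ^ p₂ = ‖(q : ℂ)‖ := by rw [← norm_pow, ha₂]
  have hlogt : (p₂ : ℝ) * Real.log (‖(a₂ : ℂ)‖) = Real.log (‖(q : ℂ)‖) := by
    rw [← Real.log_pow, htp]
  have hL : 0 < Real.log (‖(q : ℂ)‖) := Real.log_pos hq
  have hprodpos : (0:ℝ) < ∏ i : Fin ν, (bval q (i : ℕ)) ^ w i :=
    Finset.prod_pos fun i _ => zpow_pos (bval_pos hq i) _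
  have h0 : ∀ i ∈ (Finset.univ : Finset (Fin ν)), bval q (i : ℕ) ^ w i ≠ 0 :=
    fun i _ => (zpow_pos (bval_pos hq i) _).ne'
  have hlog0 := congrArg Real.log habs
  rw [Real.log_mul (zpow_ne_zero _ ht0.ne') hprodpos.ne',
    Real.log_prod h0] at hlog0
  simp only [Real.log_zpow, bval, Real.log_rpow hr0] at hlog0
  set S : ℝ := ∑ i : Fin ν, (w i : ℝ) * θ ^ ((i : ℕ) + 1) with hS_def
  have key : (k : ℝ) + (p₂ : ℝ) * S = (p₂ : ℝ) * m := by
    have h4 : ((k : ℝ) + (p₂ : ℝ) * S) * Real.log (‖(q : ℂ)‖)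
        = ((p₂ : ℝ) * m) * Real.log (‖(q : ℂ)‖) := by
      have hsum : ∑ i : Fin ν, (w i : ℝ) * (θ ^ ((i : ℕ) + 1) * Real.log (‖(q : ℂ)‖))
          = S * Real.log (‖(q : ℂ)‖) := by
        rw [hS_def, Finset.sum_mul]
        exact Finset.sum_congr rfl fun i _ => by ring
      linear_combination (p₂ : ℝ) * hlog0 - (p₂ : ℝ) * hsum - (k : ℝ) * hlogt
    exact mul_right_cancel₀ hL.ne' h4
  -- transcendence: build an integer polynomial vanishing at θ
  set P : Polynomial ℤ :=
    Polynomial.C ((p₂ : ℤ) * m - (k : ℤ))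
      - ∑ i : Fin ν, Polynomial.C ((p₂ : ℤ) * w i) * Polynomial.X ^ ((i : ℕ) + 1) with hP_def
  have hPval : Polynomial.aeval θ P = 0 := by
    rw [hP_def]
    simp only [map_sub, map_sum, map_mul, Polynomial.aeval_C, map_pow, Polynomial.aeval_X,
      eq_intCast, map_intCast]
    push_cast
    rw [sub_eq_zero]
    have hs : ∑ i : Fin ν, (p₂ : ℝ) * (w i : ℝ) * θ ^ ((i : ℕ) + 1) = (p₂ : ℝ) * S := by
      rw [hS_def, Finset.mul_sum]
      exact Finset.sum_congr rfl fun i _ => by ring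
    rw [hs]
    linarith [key]
  have hP0 : P = 0 := by
    by_contra hne
    exact θ_trans ⟨P, hne, hPval⟩
  -- extract coefficients
  have hw : w = 0 := by
    funext i₀
    have hc := congrArg (fun Q => Polynomial.coeff Q ((i₀ : ℕ) + 1)) hP0
    simp only [hP_def, Polynomial.coeff_sub, Polynomial.coeff_zero, Polynomial.coeff_C,
      Polynomial.finset_sum_coeff, Polynomial.coeff_C_mul, Polynomial.coeff_X_pow] at hc
    rw [Finset.sum_eq_single i₀ (fun i _ hne => by
        rw [if_neg (fun h => hne (Fin.ext (by omega)))]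
        ring) (fun h => absurd (Finset.mem_univ i₀) h)] at hc
    rw [if_pos rfl, mul_one] at hc
    rw [if_neg (by omega : ¬((i₀ : ℕ) + 1 = 0))] at hc
    have hp₂' : (p₂ : ℤ) ≠ 0 := by exact_mod_cast hp₂.ne'
    have h5 : (p₂ : ℤ) * w i₀ = 0 := by linarith [hc]
    have := (mul_eq_zero.mp h5).resolve_left hp₂'
    simpa using this
  have hkm : (k : ℤ) = (p₂ : ℤ) * m := by
    have hc := congrArg (fun Q => Polynomial.coeff Q 0) hP0
    simp only [hP_def, Polynomial.coeff_sub, Polynomial.coeff_zero, Polynomial.coeff_C,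
      Polynomial.finset_sum_coeff, Polynomial.coeff_C_mul, Polynomial.coeff_X_pow] at hc
    rw [Finset.sum_eq_zero (fun (i : Fin ν) _ => by
        rw [if_neg (by omega)]
        ring)] at hc
    norm_num at hc
    linarith [hc]
  -- conclude m = 0, k = 0
  have hp₂' : (0:ℤ) < (p₂ : ℤ) := by exact_mod_cast hp₂
  have hk' : (k : ℤ) < (p₂ : ℤ) := by exact_mod_cast hk
  have hm0 : m = 0 := by
    rcases lt_trichotomy m 0 with h | h | h
    · nlinarith [hkm, (Nat.cast_nonneg k : (0:ℤ) ≤ (k:ℤ))]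
    · exact h
    · nlinarith [hkm]
  have hk0 : k = 0 := by
    have : (k : ℤ) = 0 := by rw [hkm, hm0, mul_zero]
    exact_mod_cast this
  -- now the original equation gives ζ₁ ^ j = 1
  have hζj : ζ₁ ^ j = 1 := by
    rw [hw, hk0, hm0] at heq
    simpa using heq
  have hj0 : j = 0 := Nat.eq_zero_of_dvd_of_lt ((hζ₁.pow_eq_one_iff_dvd j).mp hζj) hj
  exact ⟨hj0, hk0, hw⟩


lemma mkHom_e₁ {p₁ p₂ ν : ℕ} [NeZero p₁] [NeZero p₂] {G : Type*} [CommGroup G]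
    (c₁ c₂ : G) (bb : Fin ν → G) (h₁ : c₁ ^ p₁ = 1) (h₂ : c₂ ^ p₂ = 1) :
    mkHom c₁ c₂ bb h₁ h₂ ((((1:ℤ) : ZMod p₁)), 0, 0) = Additive.ofMul c₁ := by
  have h0 : mkHom c₁ c₂ bb h₁ h₂ ((((1:ℤ) : ZMod p₁)), 0, 0)
      = cycHom c₁ h₁ (((1:ℤ) : ZMod p₁)) + cycHom c₂ h₂ 0 + piHom bb 0 := rfl
  rw [h0, map_zero, map_zero, add_zero, add_zero, cycHom_coe, zpow_one]

lemma mkHom_e₂ {p₁ p₂ ν : ℕ} [NeZero p₁] [NeZero p₂] {G : Type*} [CommGroup G]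
    (c₁ c₂ : G) (bb : Fin ν → G) (h₁ : c₁ ^ p₁ = 1) (h₂ : c₂ ^ p₂ = 1) :
    mkHom c₁ c₂ bb h₁ h₂ (0, (((1:ℤ) : ZMod p₂)), 0) = Additive.ofMul c₂ := by
  have h0 : mkHom c₁ c₂ bb h₁ h₂ (0, (((1:ℤ) : ZMod p₂)), 0)
      = cycHom c₁ h₁ 0 + cycHom c₂ h₂ (((1:ℤ) : ZMod p₂)) + piHom bb 0 := rfl
  rw [h0, map_zero, map_zero, add_zero, zero_add, cycHom_coe, zpow_one]

lemma mkHom_single {p₁ p₂ ν : ℕ} [NeZero p₁] [NeZero p₂] {G : Type*} [CommGroup G]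
    (c₁ c₂ : G) (bb : Fin ν → G) (h₁ : c₁ ^ p₁ = 1) (h₂ : c₂ ^ p₂ = 1) (i : Fin ν) :
    mkHom c₁ c₂ bb h₁ h₂ (0, 0, Pi.single i 1) = Additive.ofMul (bb i) := by
  have h0 : mkHom c₁ c₂ bb h₁ h₂ (0, 0, Pi.single i 1)
      = cycHom c₁ h₁ 0 + cycHom c₂ h₂ 0 + piHom bb (Pi.single i 1) := rfl
  rw [h0, map_zero, map_zero, zero_add, zero_add]
  show Additive.ofMul (∏ j, bb j ^ ((Pi.single i (1:ℤ) : Fin ν → ℤ) j)) = Additive.ofMul (bb i)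
  congr 1
  rw [Finset.prod_eq_single i (fun j _ hne => by
      rw [Pi.single_eq_of_ne hne, zpow_zero]) (fun h => absurd (Finset.mem_univ i) h)]
  rw [Pi.single_eq_same, zpow_one]

end Stmt10

end

open Stmt10

/-- For `|q| > 1`, positive integers `p₁, p₂` and `ν ≥ 0`, there is a surjective group
homomorphism from `Hom(ℂˣ/q^ℤ, ℂˣ)` onto `(ℤ/p₁ℤ) × (ℤ/p₂ℤ) × (ℂˣ)^ν`. -/
theorem stmt10 (q : ℂˣ) (hq : 1 < ‖(q : ℂ)‖)
    (p₁ p₂ : ℕ) (hp₁ : 0 < p₁) (hp₂ : 0 < p₂) (ν : ℕ) :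
    ∃ φ : ((ℂˣ ⧸ Subgroup.zpowers q) →* ℂˣ) →*
        (Multiplicative (ZMod p₁) × Multiplicative (ZMod p₂) × (Fin ν → ℂˣ)),
      Function.Surjective φ := by
  classical
  haveI : NeZero p₁ := ⟨hp₁.ne'⟩
  haveI : NeZero p₂ := ⟨hp₂.ne'⟩
  -- primitive roots of unity in ℂˣ
  obtain ⟨ζ₁, hζ₁⟩ : ∃ ζ : ℂˣ, IsPrimitiveRoot ζ p₁ :=
    ⟨((Complex.isPrimitiveRoot_exp p₁ hp₁.ne').isUnit hp₁.ne').unit,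
      (Complex.isPrimitiveRoot_exp p₁ hp₁.ne').isUnit_unit hp₁.ne'⟩
  obtain ⟨ζ₂, hζ₂⟩ : ∃ ζ : ℂˣ, IsPrimitiveRoot ζ p₂ :=
    ⟨((Complex.isPrimitiveRoot_exp p₂ hp₂.ne').isUnit hp₂.ne').unit,
      (Complex.isPrimitiveRoot_exp p₂ hp₂.ne').isUnit_unit hp₂.ne'⟩
  -- a p₂-th root of q
  obtain ⟨a₂, ha₂⟩ : ∃ a : ℂˣ, (a : ℂ) ^ p₂ = (q : ℂ) := by
    have key : ((q : ℂ) ^ ((p₂ : ℂ)⁻¹)) ^ p₂ = (q : ℂ) := Complex.cpow_nat_inv_pow _ hp₂.ne'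
    have hne : ((q : ℂ) ^ ((p₂ : ℂ)⁻¹)) ≠ 0 := by
      intro h
      rw [h, zero_pow hp₂.ne'] at key
      exact q.ne_zero key.symm
    exact ⟨Units.mk0 _ hne, key⟩
  have ha₂U : a₂ ^ p₂ = q := by
    ext
    push_cast
    exact ha₂
  set π : ℂˣ →* (ℂˣ ⧸ Subgroup.zpowers q) := QuotientGroup.mk' (Subgroup.zpowers q) with hπ
  -- torsion relations in the quotient
  have hπζ₁ : (π ζ₁) ^ p₁ = 1 := by rw [← map_pow, hζ₁.pow_eq_one, map_one]
  have hπa₂ : (π a₂) ^ p₂ = 1 := by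
    rw [← map_pow, ha₂U]
    exact (QuotientGroup.eq_one_iff q).mpr (Subgroup.mem_zpowers q)
  -- the embedded "lattice"
  set ψ : (ZMod p₁ × ZMod p₂ × (Fin ν → ℤ)) →+ Additive (ℂˣ ⧸ Subgroup.zpowers q) :=
    mkHom (π ζ₁) (π a₂) (fun i => π (bunit q hq i)) hπζ₁ hπa₂ with hψdef
  have hψ : Function.Injective ψ := by
    rw [injective_iff_map_eq_zero]
    rintro ⟨u, v, w⟩ h
    have h5 : Additive.toMul (ψ (u, v, w)) = (1 : ℂˣ ⧸ Subgroup.zpowers q) := by rw [h]; rfl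
    have h1 : (ζ₁ ^ ((u.val : ℤ)) * a₂ ^ ((v.val : ℤ)) * ∏ i : Fin ν, bunit q hq i ^ w i)
        ∈ Subgroup.zpowers q := by
      have h3 : π (ζ₁ ^ ((u.val : ℤ)) * a₂ ^ ((v.val : ℤ)) * ∏ i : Fin ν, bunit q hq i ^ w i)
          = Additive.toMul (ψ (u, v, w)) := by
        rw [hψdef, mkHom_apply]
        simp only [toMul_ofMul]
        rw [map_mul, map_mul, map_zpow, map_zpow, map_prod]
        simp only [map_zpow]
      rw [← QuotientGroup.eq_one_iff]
      exact h3.trans h5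
    obtain ⟨m, hm⟩ := Subgroup.mem_zpowers_iff.mp h1
    obtain ⟨hj0, hk0, hw0⟩ := indep q hq hp₁ hp₂ ζ₁ a₂ hζ₁ ha₂ w u.val v.val
      (ZMod.val_lt u) (ZMod.val_lt v) m hm.symm
    have hu : u = 0 := by
      have := (ZMod.val_eq_zero u).mp hj0
      exact this
    have hv : v = 0 := (ZMod.val_eq_zero v).mp hk0
    rw [hu, hv, hw0]
    rfl
  -- the evaluation homomorphism φ
  have hmem₁ : ∀ χ : (ℂˣ ⧸ Subgroup.zpowers q) →* ℂˣ, χ (π ζ₁) ∈ Subgroup.zpowers ζ₁ := by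
    intro χ
    rw [hζ₁.zpowers_eq, _root_.mem_rootsOfUnity]
    rw [← map_pow, hπζ₁, map_one]
  have hmem₂ : ∀ χ : (ℂˣ ⧸ Subgroup.zpowers q) →* ℂˣ, χ (π a₂) ∈ Subgroup.zpowers ζ₂ := by
    intro χ
    rw [hζ₂.zpowers_eq, _root_.mem_rootsOfUnity]
    rw [← map_pow, hπa₂, map_one]
  set E₁ : ((ℂˣ ⧸ Subgroup.zpowers q) →* ℂˣ) →* Subgroup.zpowers ζ₁ :=
    { toFun := fun χ => ⟨χ (π ζ₁), hmem₁ χ⟩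
      map_one' := rfl
      map_mul' := fun _ _ => rfl } with hE₁
  set E₂ : ((ℂˣ ⧸ Subgroup.zpowers q) →* ℂˣ) →* Subgroup.zpowers ζ₂ :=
    { toFun := fun χ => ⟨χ (π a₂), hmem₂ χ⟩
      map_one' := rfl
      map_mul' := fun _ _ => rfl } with hE₂
  set E₃ : ((ℂˣ ⧸ Subgroup.zpowers q) →* ℂˣ) →* (Fin ν → ℂˣ) :=
    { toFun := fun χ i => χ (π (bunit q hq i))
      map_one' := rfl
      map_mul' := fun _ _ => rfl } with hE₃
  set d₁ : Subgroup.zpowers ζ₁ ≃* Multiplicative (ZMod p₁) :=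
    AddEquiv.toMultiplicativeRight hζ₁.zmodEquivZPowers.symm with hd₁
  set d₂ : Subgroup.zpowers ζ₂ ≃* Multiplicative (ZMod p₂) :=
    AddEquiv.toMultiplicativeRight hζ₂.zmodEquivZPowers.symm with hd₂
  refine ⟨(d₁.toMonoidHom.comp E₁).prod ((d₂.toMonoidHom.comp E₂).prod E₃), ?_⟩
  rintro ⟨x, y, f⟩
  -- build a character with the prescribed values
  set c₁ : ℂˣ := ζ₁ ^ (Multiplicative.toAdd x).val with hc₁def
  set c₂ : ℂˣ := ζ₂ ^ (Multiplicative.toAdd y).val with hc₂def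
  have hc₁ : c₁ ^ p₁ = 1 := by rw [hc₁def, ← pow_mul, mul_comm, pow_mul, hζ₁.pow_eq_one, one_pow]
  have hc₂ : c₂ ^ p₂ = 1 := by rw [hc₂def, ← pow_mul, mul_comm, pow_mul, hζ₂.pow_eq_one, one_pow]
  set g : (ZMod p₁ × ZMod p₂ × (Fin ν → ℤ)) →+ Additive ℂˣ := mkHom c₁ c₂ f hc₁ hc₂ with hgdef
  obtain ⟨χ', hχ'⟩ :=
    (Module.Baer.of_divisible (Additive ℂˣ)).extension_property_addMonoidHom (AddMonoidHom.mk' ψ (map_add ψ)) hψ (AddMonoidHom.mk' g (map_add g))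
  set χ : (ℂˣ ⧸ Subgroup.zpowers q) →* ℂˣ := MonoidHom.toAdditive.symm χ' with hχdef
  have hval : ∀ aa, χ' (ψ aa) = g aa := fun aa => DFunLike.congr_fun hχ' aa
  have hχ_app : ∀ z : ℂˣ ⧸ Subgroup.zpowers q,
      χ z = Additive.toMul (χ' (Additive.ofMul z)) := fun z => rfl
  have hev₁ : χ (π ζ₁) = c₁ := by
    have h := hval ((((1:ℤ) : ZMod p₁)), 0, 0)
    rw [hψdef, mkHom_e₁, hgdef, mkHom_e₁] at h
    rw [hχ_app]
    rw [h]
    rfl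
  have hev₂ : χ (π a₂) = c₂ := by
    have h := hval (0, (((1:ℤ) : ZMod p₂)), 0)
    rw [hψdef, mkHom_e₂, hgdef, mkHom_e₂] at h
    rw [hχ_app, h]
    rfl
  have hev₃ : ∀ i : Fin ν, χ (π (bunit q hq (i : ℕ))) = f i := by
    intro i
    have h := hval (0, 0, Pi.single i 1)
    rw [hψdef, mkHom_single, hgdef, mkHom_single] at h
    rw [hχ_app, h]
    rfl
  refine ⟨χ, ?_⟩
  have hcomp₁ : d₁ (E₁ χ) = x := by
    have hE : E₁ χ = ⟨ζ₁ ^ (Multiplicative.toAdd x).val,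
        ⟨((Multiplicative.toAdd x).val : ℤ), rfl⟩⟩ := by
      apply Subtype.ext
      exact hev₁
    rw [hE, hd₁]
    rw [AddEquiv.toMultiplicativeRight_apply_apply]
    simp only [AddMonoidHom.coe_toMultiplicativeRight, Function.comp_apply,
      AddEquiv.coe_toAddMonoidHom]
    rw [hζ₁.zmodEquivZPowers_symm_apply_pow]
    rw [ZMod.natCast_rightInverse (Multiplicative.toAdd x)]
    rfl
  have hcomp₂ : d₂ (E₂ χ) = y := by
    have hE : E₂ χ = ⟨ζ₂ ^ (Multiplicative.toAdd y).val,
        ⟨((Multiplicative.toAdd y).val : ℤ), rfl⟩⟩ := by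
      apply Subtype.ext
      exact hev₂
    rw [hE, hd₂]
    rw [AddEquiv.toMultiplicativeRight_apply_apply]
    simp only [AddMonoidHom.coe_toMultiplicativeRight, Function.comp_apply,
      AddEquiv.coe_toAddMonoidHom]
    rw [hζ₂.zmodEquivZPowers_symm_apply_pow]
    rw [ZMod.natCast_rightInverse (Multiplicative.toAdd y)]
    rfl
  refine Prod.ext hcomp₁ (Prod.ext hcomp₂ ?_)
  funext i
  exact hev₃ i
end

section
/- Let G be a group, V a finite-dimensional complex vector space, and ρ : G → GL(V) a group homomorphism. Let I be an index set and, for each i ∈ I, let ρ_i : G → ℂˣ be a group homomorphism and x_i ∈ End(V) an endomorphism satisfying ρ(g) ∘ x_i ∘ ρ(g)⁻¹ = ρ_i(g) · x_i for all g ∈ G. Assume that for every group homomorphism χ : G → ℂˣ, the set {i ∈ I : ρ_i = χ} is finite. Then the set {i ∈ I : x_i ≠ 0} is finite. -/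
/-- Given a representation `ρ : G → GL(V)` on a finite-dimensional complex vector space,
characters `ρᵢ : G → ℂˣ` and endomorphisms `xᵢ` with `ρ(g) xᵢ ρ(g)⁻¹ = ρᵢ(g) • xᵢ`, if
each character has only finitely many indices attached to it, then only finitely many
`xᵢ` are nonzero. -/
theorem stmt12 (G : Type) [Group G]
    (V : Type) [AddCommGroup V] [Module ℂ V] [FiniteDimensional ℂ V]
    (ρ : G →* (Module.End ℂ V)ˣ)
    (I : Type) (ρi : I → (G →* ℂˣ)) (x : I → Module.End ℂ V)
    (hx : ∀ (i : I) (g : G),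
      (ρ g : Module.End ℂ V) * x i * ((ρ g)⁻¹ : (Module.End ℂ V)ˣ) =
        ((ρi i g : ℂ)) • x i)
    (hfin : ∀ χ : G →* ℂˣ, {i : I | ρi i = χ}.Finite) :
    {i : I | x i ≠ 0}.Finite := by
  classical
  set S : Set (G →* ℂˣ) := ρi '' {i : I | x i ≠ 0} with hS
  -- choose a representative index for each character in S
  have hchoice : ∀ χ : S, ∃ i : I, x i ≠ 0 ∧ ρi i = (χ : G →* ℂˣ) := by
    rintro ⟨χ, i, hi, rfl⟩
    exact ⟨i, hi, rfl⟩
  choose ind hind_ne hind_eq using hchoice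
  -- the chosen endomorphisms are linearly independent
  have hli : LinearIndependent ℂ (fun χ : S => x (ind χ)) := by
    rw [linearIndependent_iff']
    intro s c hsum j hj
    -- For every g, conjugating the relation gives a relation with character values
    have key : ∀ g : G, ∑ k ∈ s, (((ρi (ind k) g : ℂ)) * c k) • x (ind k) = 0 := by
      intro g
      have := congrArg (fun y : Module.End ℂ V =>
        (ρ g : Module.End ℂ V) * y * ((ρ g)⁻¹ : (Module.End ℂ V)ˣ)) hsum
      simp only [Finset.sum_mul, Finset.mul_sum, mul_zero, zero_mul] at this
      rw [← this]
      refine Finset.sum_congr rfl fun k _ => ?_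
      rw [mul_smul_comm, smul_mul_assoc, hx (ind k) g, smul_smul, mul_comm]
    -- apply an arbitrary linear functional and use independence of characters
    have hφ : ∀ φ : Module.Dual ℂ (Module.End ℂ V), c j * φ (x (ind j)) = 0 := by
      intro φ
      have hrel : ∑ k ∈ s, (c k * φ (x (ind k))) •
          (((Units.coeHom ℂ).comp ((k : S) : G →* ℂˣ)) : G → ℂ) = 0 := by
        funext g
        have := congrArg φ (key g)
        simp only [map_sum, map_smul, map_zero, smul_eq_mul] at this
        simpa only [Finset.sum_apply, Pi.smul_apply, Pi.zero_apply, smul_eq_mul,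
          MonoidHom.coe_comp, Function.comp_apply, Units.coeHom_apply, hind_eq,
          mul_comm, mul_assoc, mul_left_comm] using this
      have hinj : Function.Injective
          (fun χ : S => (Units.coeHom ℂ).comp ((χ : S) : G →* ℂˣ)) := by
        intro a b hab
        apply Subtype.ext
        ext g
        exact congrArg (fun f : G →* ℂ => f g) hab
      have hli' := (linearIndependent_monoidHom G ℂ).comp _ hinj
      exact linearIndependent_iff'.mp hli' s _ hrel j hj
    have : c j • x (ind j) = 0 := by
      rw [← Module.forall_dual_apply_eq_zero_iff ℂ]
      intro φ
      rw [map_smul, smul_eq_mul]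
      exact hφ φ
    rcases smul_eq_zero.mp this with h | h
    · exact h
    · exact absurd h (hind_ne j)
  have hSfin : S.Finite := by
    have : Finite S := hli.finite
    exact Set.toFinite S
  have hsub : {i : I | x i ≠ 0} ⊆ ⋃ χ ∈ S, {i : I | ρi i = χ} := by
    intro i hi
    exact Set.mem_biUnion ⟨i, hi, rfl⟩ rfl
  exact (hSfin.biUnion fun χ _ => hfin χ).subset hsub
end

section
/- Let X be a type and let L be the free Lie algebra over ℂ on X. Define the lower central series of L by L¹ = L and L^{n+1} = [L, L^n]. Then ⋂_{n ≥ 1} L^n = 0; that is, the free Lie algebra is residually nilpotent, so the natural map from L to its pronilpotent completion (the inverse limit of the nilpotent quotients L/L^n) is injective. -/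
noncomputable section Stmt13Aux

open FreeLieAlgebra MonoidAlgebra

namespace Stmt13Aux

variable {X : Type}

/-- length of a free magma word -/
def deg : FreeMagma X → ℕ
  | .of _ => 1
  | .mul a b => deg a + deg b

@[simp] lemma deg_of (x : X) : deg (FreeMagma.of x) = 1 := rfl

@[simp] lemma deg_mul (a b : FreeMagma X) : deg (a * b) = deg a + deg b := rfl

lemma one_le_deg (w : FreeMagma X) : 1 ≤ deg w := by
  induction w with
  | ih1 x => simp
  | ih2 a b ha hb => simp only [deg_mul]; omega

abbrev lib (X : Type) := FreeNonUnitalNonAssocAlgebra ℂ X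

abbrev L (X : Type) := FreeLieAlgebra ℂ X

/-- the quotient map as a linear map -/
def mkL : lib X →ₗ[ℂ] L X where
  toFun := FreeLieAlgebra.mk ℂ
  map_add' _ _ := rfl
  map_smul' _ _ := rfl

lemma mk_surjective : Function.Surjective (mkL (X := X)) := fun z => Quot.exists_rep z

lemma mk_mul (a b : lib X) : mkL (a * b) = ⁅mkL a, mkL b⁆ :=
  map_mul (FreeLieAlgebra.mk ℂ) a b

/-- The submodule of `lib` spanned by words of degree at least `k`. -/
def Wge (k : ℕ) : Submodule ℂ (lib X) where
  carrier := {a | ∀ w ∈ a.coeff.support, k ≤ deg w}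
  zero_mem' := by simp
  add_mem' {a b} ha hb := by
    classical
    intro w hw
    rcases Finset.mem_union.mp (Finsupp.support_add hw) with h | h
    exacts [ha w h, hb w h]
  smul_mem' c a ha := fun w hw => ha w (Finsupp.support_smul hw)

lemma mem_Wge {k : ℕ} {a : lib X} : a ∈ Wge k ↔ ∀ w ∈ a.coeff.support, k ≤ deg w := by
  exact Iff.rfl

lemma top_mem_Wge (a : lib X) : a ∈ Wge 1 := mem_Wge.mpr fun w _ => one_le_deg w

lemma mul_mem_Wge {i j : ℕ} {a b : lib X} (ha : a ∈ Wge i) (hb : b ∈ Wge j) :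
    a * b ∈ Wge (i + j) := by
  classical
  rw [mem_Wge] at ha hb ⊢
  intro w hw
  obtain ⟨u, hu, v, hv, rfl⟩ := Finset.mem_mul.mp (MonoidAlgebra.support_coeff_mul_subset a b hw)
  have := ha u hu
  have := hb v hv
  simp only [deg_mul]
  omega

lemma Wge_antitone {i j : ℕ} (h : i ≤ j) : (Wge j : Submodule ℂ (lib X)) ≤ Wge i := by
  intro a ha
  rw [mem_Wge] at ha ⊢
  exact fun w hw => le_trans h (ha w hw)

/-- The image of `Wge k` in the free Lie algebra, as a Lie ideal. -/
def T (k : ℕ) : LieIdeal ℂ (L X) :=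
  { Submodule.map mkL (Wge k) with
    lie_mem := by
      rintro x m ⟨b, hb, rfl⟩
      obtain ⟨a, rfl⟩ := mk_surjective x
      refine ⟨a * b, ?_, (mk_mul a b).symm⟩
      exact Wge_antitone (by omega) (mul_mem_Wge (top_mem_Wge a) hb) }

lemma mem_T {k : ℕ} {z : L X} : z ∈ T k ↔ ∃ b ∈ Wge k, mkL b = z := by
  exact Submodule.mem_map

lemma lcs_le_T : ∀ k, LieModule.lowerCentralSeries ℂ (L X) (L X) k ≤ T k := by
  intro k
  induction k with
  | zero =>
    intro z _
    obtain ⟨a, rfl⟩ := mk_surjective z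
    exact mem_T.mpr ⟨a, mem_Wge.mpr fun w _ => Nat.zero_le _, rfl⟩
  | succ k ih =>
    rw [LieModule.lowerCentralSeries_succ]
    refine le_trans (LieSubmodule.mono_lie_right _ ih) ?_
    rw [LieSubmodule.lie_le_iff]
    rintro x _ m hm
    obtain ⟨b, hb, rfl⟩ := mem_T.mp hm
    obtain ⟨a, rfl⟩ := mk_surjective x
    refine mem_T.mpr ⟨a * b, ?_, (mk_mul a b).symm⟩
    have h := mul_mem_Wge (top_mem_Wge a) hb
    rwa [Nat.add_comm] at h

/-- the scaling Lie algebra endomorphism determined by `of x ↦ c • of x` -/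
def sig (c : ℂ) : L X →ₗ⁅ℂ⁆ L X :=
  FreeLieAlgebra.lift ℂ fun x => c • FreeLieAlgebra.of ℂ x

lemma sig_single (c : ℂ) (w : FreeMagma X) :
    ∀ r : ℂ, sig c (mkL (MonoidAlgebra.single w r))
      = c ^ deg w • mkL (MonoidAlgebra.single w r) := by
  induction w with
  | ih1 x =>
    intro r
    have h1 : (MonoidAlgebra.single (FreeMagma.of x) r : lib X)
        = r • FreeNonUnitalNonAssocAlgebra.of ℂ x := by
      show _ = r • MonoidAlgebra.single (FreeMagma.of x) (1 : ℂ)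
      rw [MonoidAlgebra.smul_single', mul_one]
    have h2 : mkL (FreeNonUnitalNonAssocAlgebra.of ℂ x) = FreeLieAlgebra.of ℂ x := rfl
    rw [h1, map_smul, h2, map_smul, sig, lift_of_apply]
    rw [deg_of, pow_one, smul_comm]
  | ih2 u v hu hv =>
    intro r
    have h1 : (MonoidAlgebra.single (u * v) r : lib X)
        = MonoidAlgebra.single u r * MonoidAlgebra.single v 1 := by
      rw [MonoidAlgebra.single_mul_single, mul_one]
    rw [h1, mk_mul, LieHom.map_lie, hu, hv, ← mk_mul, ← h1]
    rw [smul_lie, lie_smul, smul_smul, ← pow_add, deg_mul, h1, mk_mul]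

lemma mk_expand (a : lib X) :
    mkL a = ∑ w ∈ a.coeff.support, mkL (MonoidAlgebra.single w (a.coeff w)) := by
  conv_lhs => rw [← MonoidAlgebra.sum_coeff_single a, Finsupp.sum, map_sum]

lemma sig_mk (c : ℂ) (a : lib X) :
    sig c (mkL a) = ∑ w ∈ a.coeff.support, c ^ deg w • mkL (MonoidAlgebra.single w (a.coeff w)) := by
  calc sig c (mkL a) = (sig c).toLinearMap (∑ w ∈ a.coeff.support, mkL (MonoidAlgebra.single w (a.coeff w))) := by
        rw [← mk_expand a]; rfl
    _ = ∑ w ∈ a.coeff.support, (sig c).toLinearMap (mkL (MonoidAlgebra.single w (a.coeff w))) :=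
        map_sum _ _ _
    _ = ∑ w ∈ a.coeff.support, c ^ deg w • mkL (MonoidAlgebra.single w (a.coeff w)) :=
        Finset.sum_congr rfl fun w _ => sig_single c w (a.coeff w)

end Stmt13Aux

end Stmt13Aux

open Stmt13Aux in
/-- The free Lie algebra over ℂ on a type `X` is residually nilpotent: the intersection
of its lower central series (`L¹ = L`, `L^{n+1} = [L, L^n]`) is zero. -/
theorem stmt13 (X : Type) :
    ⨅ n : ℕ,
      LieModule.lowerCentralSeries ℂ (FreeLieAlgebra ℂ X) (FreeLieAlgebra ℂ X) n = ⊥ := by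
  classical
  rw [eq_bot_iff]
  intro z hz
  rw [LieSubmodule.mem_bot]
  obtain ⟨a, rfl⟩ := mk_surjective z
  set N := a.coeff.support.sup deg with hN
  have hdegN : ∀ w ∈ a.coeff.support, deg w ≤ N := fun w hw => Finset.le_sup hw
  have hzT : mkL a ∈ T (X := X) (N + 1) :=
    lcs_le_T (N + 1) ((LieSubmodule.mem_iInf _).mp hz (N + 1))
  obtain ⟨b, hb, hab⟩ := mem_T.mp hzT
  rw [mem_Wge] at hb
  -- the degree-`n` components of `a` map to zero for `n ≤ N`
  have key : ∀ n, n ≤ N →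
      ∑ w ∈ a.coeff.support.filter (fun w => deg w = n), mkL (MonoidAlgebra.single w (a.coeff w)) = 0 := by
    intro n hn
    rw [← Module.forall_dual_apply_eq_zero_iff ℂ]
    intro f
    have hpq :
        (∑ w ∈ a.coeff.support, Polynomial.monomial (deg w) (f (mkL (MonoidAlgebra.single w (a.coeff w)))))
          = ∑ w ∈ b.coeff.support,
              Polynomial.monomial (deg w) (f (mkL (MonoidAlgebra.single w (b.coeff w)))) := by
      apply Polynomial.funext
      intro c
      have h1 : ∀ (d : lib X),
          Polynomial.eval c (∑ w ∈ d.coeff.support,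
            Polynomial.monomial (deg w) (f (mkL (MonoidAlgebra.single w (d.coeff w)))))
            = f (sig c (mkL d)) := by
        intro d
        rw [sig_mk, map_sum, Polynomial.eval_finset_sum]
        exact Finset.sum_congr rfl fun w _ => by
          rw [Polynomial.eval_monomial, map_smul, smul_eq_mul, mul_comm]
      rw [h1, h1, hab]
    have hc := congrArg (fun r => Polynomial.coeff r n) hpq
    simp only [Polynomial.finset_sum_coeff, Polynomial.coeff_monomial] at hc
    have hq0 : ∑ w ∈ b.coeff.support,
        (if deg w = n then f (mkL (MonoidAlgebra.single w (b.coeff w))) else 0) = 0 := by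
      refine Finset.sum_eq_zero fun w hw => ?_
      have := hb w hw
      rw [if_neg (by omega)]
    rw [hq0] at hc
    rw [map_sum, Finset.sum_filter]
    exact hc
  -- conclude
  rw [mk_expand a,
    ← Finset.sum_fiberwise_of_maps_to (g := deg) (t := Finset.range (N + 1))
      (fun w hw => Finset.mem_range.mpr (Nat.lt_succ_of_le (hdegN w hw)))]
  exact Finset.sum_eq_zero fun n hn => key n (Nat.lt_succ_iff.mp (Finset.mem_range.mp hn))
end

section
/- Let 𝔤 be a Lie algebra over ℂ with an ℕ-grading 𝔤 = ⊕_{δ∈ℕ} 𝔤^{(δ)} (meaning [𝔤^{(i)}, 𝔤^{(j)}] ⊆ 𝔤^{(i+j)} for all i, j), such that 𝔤^{(0)} = ℂ·ν is one-dimensional and, for every δ, the operator ad ν is nilpotent on 𝔤^{(δ)} (i.e. (ad ν)^k(𝔤^{(δ)}) = 0 for some k). Let S be a graded Lie subalgebra of 𝔤 (S = ⊕_δ (S ∩ 𝔤^{(δ)})) containing ν and satisfying S + [𝔤, 𝔤] = 𝔤. Then S = 𝔤. -/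
/-- Let `𝔤` be an ℕ-graded complex Lie algebra with one-dimensional degree-zero part
`𝔤⁰ = ℂ·ν`, such that `ad ν` is nilpotent on every graded component. If `S` is a graded
Lie subalgebra containing `ν` with `S + [𝔤, 𝔤] = 𝔤`, then `S = 𝔤`. -/
theorem stmt17 (𝔤 : Type) [LieRing 𝔤] [LieAlgebra ℂ 𝔤]
    (g : ℕ → Submodule ℂ 𝔤)
    (hdecomp : DirectSum.IsInternal g)
    (hbracket : ∀ i j : ℕ, ∀ x ∈ g i, ∀ y ∈ g j, ⁅x, y⁆ ∈ g (i + j))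
    (ν : 𝔤) (hν : ν ≠ 0)
    (h0 : g 0 = Submodule.span ℂ ({ν} : Set 𝔤))
    (hnil : ∀ δ : ℕ, ∃ k : ℕ, ∀ x ∈ g δ, ((LieAlgebra.ad ℂ 𝔤 ν) ^ k) x = 0)
    (S : LieSubalgebra ℂ 𝔤)
    (hgraded : S.toSubmodule = ⨆ δ : ℕ, (S.toSubmodule ⊓ g δ))
    (hνS : ν ∈ S)
    (hgen : S.toSubmodule ⊔
        LieSubmodule.toSubmodule ⁅(⊤ : LieIdeal ℂ 𝔤), (⊤ : LieIdeal ℂ 𝔤)⁆ = ⊤) :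
    S = ⊤ := by
  classical
  -- projections onto graded components
  set e : DirectSum ℕ (fun i => g i) ≃ₗ[ℂ] 𝔤 := LinearEquiv.ofBijective (DirectSum.coeLinearMap g) hdecomp
    with he
  let π : ℕ → (𝔤 →ₗ[ℂ] 𝔤) := fun δ =>
    (g δ).subtype ∘ₗ (DFinsupp.lapply δ) ∘ₗ e.symm.toLinearMap
  have hπ_same : ∀ δ (x : 𝔤), x ∈ g δ → π δ x = x := by
    intro δ x hx
    show (((e.symm x) δ : g δ) : 𝔤) = x
    rw [he, hdecomp.ofBijective_coeLinearMap_of_mem hx]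
  have hπ_ne : ∀ δ i (x : 𝔤), x ∈ g i → i ≠ δ → π δ x = 0 := by
    intro δ i x hx hne
    show (((e.symm x) δ : g δ) : 𝔤) = 0
    rw [he, hdecomp.ofBijective_coeLinearMap_of_mem_ne hne hx]
    simp
  -- ad ν stabilizes S
  have hadS : ∀ k : ℕ, ∀ x ∈ S, ((LieAlgebra.ad ℂ 𝔤 ν) ^ k) x ∈ S := by
    intro k
    induction k with
    | zero => intro x hx; simpa using hx
    | succ n ih =>
      intro x hx
      rw [pow_succ, Module.End.mul_apply, LieAlgebra.ad_apply]
      exact ih _ (S.lie_mem hνS hx)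
  -- main induction : every graded component lies in S
  have main : ∀ δ : ℕ, g δ ≤ S.toSubmodule := by
    intro δ
    induction δ using Nat.strong_induction_on with
    | _ δ IH =>
      rcases Nat.eq_zero_or_pos δ with rfl | hδ
      · rw [h0, Submodule.span_le, Set.singleton_subset_iff]
        exact hνS
      -- the key submodule
      set R : Submodule ℂ 𝔤 :=
        S.toSubmodule ⊔ Submodule.map (LieAlgebra.ad ℂ 𝔤 ν) (g δ) with hR
      -- π δ of any bracket lies in R
      have key : ∀ x y : 𝔤, π δ ⁅x, y⁆ ∈ R := by
        have htop : ∀ z : 𝔤, z ∈ ⨆ i, g i := by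
          intro z; rw [hdecomp.submodule_iSup_eq_top]; trivial
        intro x y
        refine Submodule.iSup_induction (motive := fun x => π δ ⁅x, y⁆ ∈ R) g (htop x) ?_ ?_ ?_
        · intro i x hx
          refine Submodule.iSup_induction (motive := fun y => π δ ⁅x, y⁆ ∈ R) g (htop y) ?_ ?_ ?_
          · intro j y hy
            have hb : ⁅x, y⁆ ∈ g (i + j) := hbracket i j x hx y hy
            by_cases hij : i + j = δ
            · rw [hπ_same δ _ (hij ▸ hb)]
              rcases Nat.eq_zero_or_pos i with rfl | hi
              · -- x is a multiple of ν
                rw [h0, Submodule.mem_span_singleton] at hx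
                obtain ⟨c, rfl⟩ := hx
                have hyδ : y ∈ g δ := by simpa [← hij] using hy
                have : ⁅ν, y⁆ ∈ Submodule.map (LieAlgebra.ad ℂ 𝔤 ν) (g δ) :=
                  ⟨y, hyδ, by simp [LieAlgebra.ad_apply]⟩
                have := Submodule.smul_mem _ c
                  (Submodule.mem_sup_right (S := S.toSubmodule) this)
                simpa [smul_lie] using this
              rcases Nat.eq_zero_or_pos j with rfl | hj
              · rw [h0, Submodule.mem_span_singleton] at hy
                obtain ⟨c, rfl⟩ := hy
                have hxδ : x ∈ g δ := by simpa [← hij] using hx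
                have h1 : ⁅ν, x⁆ ∈ Submodule.map (LieAlgebra.ad ℂ 𝔤 ν) (g δ) :=
                  ⟨x, hxδ, by simp [LieAlgebra.ad_apply]⟩
                have := Submodule.smul_mem _ (-c) (Submodule.mem_sup_right (S := S.toSubmodule) h1)
                have heq : ⁅x, c • ν⁆ = (-c) • ⁅ν, x⁆ := by
                  rw [lie_smul, ← lie_skew x ν, smul_neg, neg_smul]
                rw [heq]; exact this
              · have hiδ : i < δ := by omega
                have hjδ : j < δ := by omega
                exact Submodule.mem_sup_left (S.lie_mem (IH i hiδ hx) (IH j hjδ hy))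
            · rw [hπ_ne δ (i + j) _ hb hij]; exact R.zero_mem
          · simp only [lie_zero, map_zero]; exact R.zero_mem
          · intro a b ha hb; simp only [lie_add, map_add]; exact R.add_mem ha hb
        · simp only [zero_lie, map_zero]; exact R.zero_mem
        · intro a b ha hb; simp only [add_lie, map_add]; exact R.add_mem ha hb
      -- π δ maps S into S
      have hπS : ∀ s ∈ S.toSubmodule, π δ s ∈ S.toSubmodule := by
        intro s hs
        rw [hgraded] at hs
        refine Submodule.iSup_induction (motive := fun s => π δ s ∈ S.toSubmodule)
          _ hs ?_ ?_ ?_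
        · intro i s hsi
          obtain ⟨hs1, hs2⟩ := hsi
          by_cases hid : i = δ
          · rw [hπ_same δ s (hid ▸ hs2)]; exact hs1
          · rw [hπ_ne δ i s hs2 hid]; exact Submodule.zero_mem _
        · simp only [map_zero]; exact Submodule.zero_mem _
        · intro a b ha hb; rw [map_add]; exact Submodule.add_mem _ ha hb
      -- step 1 : g δ ≤ R
      have step1 : g δ ≤ R := by
        intro x hx
        have hxtop : x ∈ S.toSubmodule ⊔
            LieSubmodule.toSubmodule ⁅(⊤ : LieIdeal ℂ 𝔤), (⊤ : LieIdeal ℂ 𝔤)⁆ := by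
          rw [hgen]; trivial
        obtain ⟨s, hs, d, hd, rfl⟩ := Submodule.mem_sup.mp hxtop
        rw [← hπ_same δ _ hx, map_add]
        refine R.add_mem (Submodule.mem_sup_left (hπS s hs)) ?_
        rw [LieSubmodule.lieIdeal_oper_eq_linear_span'] at hd
        refine Submodule.span_induction ?_ ?_ ?_ ?_ hd
        · rintro m ⟨a, -, b, -, rfl⟩; exact key a b
        · simp only [map_zero]; exact R.zero_mem
        · intro a b _ _ ha hb; rw [map_add]; exact R.add_mem ha hb
        · intro c a _ ha; rw [map_smul]; exact R.smul_mem c ha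
      -- step 2 : iterate ad ν
      have step2 : ∀ k : ℕ, g δ ≤ S.toSubmodule ⊔
          Submodule.map ((LieAlgebra.ad ℂ 𝔤 ν) ^ k) (g δ) := by
        intro k
        induction k with
        | zero => intro x hx; exact Submodule.mem_sup_right ⟨x, hx, by simp⟩
        | succ n ih =>
          intro x hx
          obtain ⟨s, hs, w, hw, rfl⟩ := Submodule.mem_sup.mp (ih hx)
          refine Submodule.add_mem _ (Submodule.mem_sup_left hs) ?_
          obtain ⟨z, hz, rfl⟩ := hw
          obtain ⟨s', hs', w', hw', hzeq⟩ := Submodule.mem_sup.mp (step1 hz)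
          obtain ⟨u, hu, rfl⟩ := hw'
          rw [← hzeq, map_add]
          refine Submodule.add_mem _
            (Submodule.mem_sup_left (hadS n s' hs')) (Submodule.mem_sup_right ?_)
          refine ⟨u, hu, ?_⟩
          rw [pow_succ]
          simp [Module.End.mul_apply]
      obtain ⟨k, hk⟩ := hnil δ
      intro x hx
      obtain ⟨s, hs, w, hw, rfl⟩ := Submodule.mem_sup.mp (step2 k hx)
      obtain ⟨z, hz, rfl⟩ := hw
      rw [hk z hz, add_zero]
      exact hs
  -- conclude
  have : S.toSubmodule = ⊤ := by
    rw [eq_top_iff, ← hdecomp.submodule_iSup_eq_top]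
    exact iSup_le main
  ext x
  simp only [LieSubalgebra.mem_top, iff_true]
  have : x ∈ S.toSubmodule := this ▸ Submodule.mem_top
  exact this
end

section
/- Let q ∈ ℂˣ with |q| > 1. Then the torsion subgroup of the quotient group ℂˣ/q^ℤ is isomorphic to (ℚ/ℤ) × (ℚ/ℤ). -/
open Complex

noncomputable section
namespace Stmt18

/-- `exp` as a map into units. -/
noncomputable def eu (z : ℂ) : ℂˣ := Units.mk0 (Complex.exp z) (Complex.exp_ne_zero z)

@[simp] lemma eu_coe (z : ℂ) : (eu z : ℂ) = Complex.exp z := rfl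

lemma eu_add (z w : ℂ) : eu (z + w) = eu z * eu w := by
  ext; simp [eu, Complex.exp_add]

lemma eu_pow (z : ℂ) (n : ℕ) : eu z ^ n = eu (n * z) := by
  ext; push_cast; simp [eu, Complex.exp_nat_mul]

variable (q : ℂˣ)

/-- The basic map `ℚ × ℚ → E_q`. -/
noncomputable def f (a b : ℚ) : ℂˣ ⧸ Subgroup.zpowers q :=
  QuotientGroup.mk (eu ((a : ℂ) * (2 * Real.pi * I) + (b : ℂ) * Complex.log q))

lemma f_add (a b a' b' : ℚ) : f q (a + a') (b + b') = f q a b * f q a' b' := by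
  unfold f
  rw [← QuotientGroup.mk_mul, ← eu_add]
  push_cast
  ring_nf

lemma f_pow (a b : ℚ) (n : ℕ) : f q a b ^ n = f q (n * a) (n * b) := by
  unfold f
  rw [← QuotientGroup.mk_pow, eu_pow]
  push_cast
  ring_nf

lemma f_eq_one_of_int (k m : ℤ) : f q (k : ℚ) (m : ℚ) = 1 := by
  unfold f
  rw [QuotientGroup.eq_one_iff, Subgroup.mem_zpowers_iff]
  refine ⟨m, ?_⟩
  ext
  simp only [eu_coe]
  push_cast
  rw [Complex.exp_add, Complex.exp_int_mul_two_pi_mul_I, one_mul,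
    Complex.exp_int_mul, Complex.exp_log (Units.ne_zero q)]

variable (hq : 1 < ‖(q : ℂ)‖)
include hq

lemma f_eq_one_iff (a b : ℚ) :
    f q a b = 1 ↔ (∃ k : ℤ, a = k) ∧ (∃ m : ℤ, b = m) := by
  constructor
  · intro h
    rw [f, QuotientGroup.eq_one_iff, Subgroup.mem_zpowers_iff] at h
    obtain ⟨n, hn⟩ := h
    have hval : ((q : ℂ)) ^ n
        = Complex.exp ((a : ℂ) * (2 * Real.pi * I) + (b : ℂ) * Complex.log q) := by
      have := congrArg (Units.val) hn
      simpa using this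
    have h' : Complex.exp ((a : ℂ) * (2 * Real.pi * I) + (b : ℂ) * Complex.log q)
        = Complex.exp ((n : ℂ) * Complex.log q) := by
      rw [Complex.exp_int_mul, Complex.exp_log (Units.ne_zero q), ← hval]
    rw [Complex.exp_eq_exp_iff_exists_int] at h'
    obtain ⟨k, hk⟩ := h'
    have hLre : 0 < (Complex.log (q : ℂ)).re := by
      rw [Complex.log_re]; exact Real.log_pos hq
    have hbn : ((b : ℝ) = (n : ℝ)) ∨ (Complex.log (q : ℂ)).re = 0 := by
      have := congrArg Complex.re hk
      simpa [Complex.add_re, Complex.mul_re, Complex.ratCast_re, Complex.ratCast_im,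
        Complex.intCast_re, Complex.intCast_im, Complex.mul_im] using this
    have hb : b = n := by
      rcases hbn with h1 | h1
      · exact_mod_cast h1
      · exact absurd h1 (ne_of_gt hLre)
    refine ⟨⟨k, ?_⟩, ⟨n, hb⟩⟩
    rw [hb] at hk
    push_cast at hk
    have h2 : ((a : ℂ)) * (2 * Real.pi * I) = (k : ℂ) * (2 * Real.pi * I) := by
      linear_combination hk
    have hne : (2 * (Real.pi : ℂ) * I) ≠ 0 := by
      simp [Real.pi_ne_zero, Complex.I_ne_zero]
    exact_mod_cast mul_right_cancel₀ hne h2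
  · rintro ⟨⟨k, hk⟩, ⟨m, hm⟩⟩
    rw [hk, hm]
    exact f_eq_one_of_int q k m

omit hq

/-- Multiplying by the product of denominators makes a rational integral. -/
lemma int_smul (a b : ℚ) : ∃ k : ℤ, ((a.den * b.den : ℕ) : ℚ) * a = k := by
  have hden : (a.den : ℚ) ≠ 0 := by exact_mod_cast a.den_ne_zero
  have h : (a.num : ℚ) = a * a.den := by
    have := Rat.num_div_den a
    rw [div_eq_iff hden] at this
    exact this.symm ▸ rfl
  exact ⟨b.den * a.num, by push_cast; rw [h]; ring⟩

lemma f_torsion (a b : ℚ) : f q a b ∈ CommGroup.torsion (ℂˣ ⧸ Subgroup.zpowers q) := by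
  rw [CommGroup.mem_torsion, isOfFinOrder_iff_pow_eq_one]
  refine ⟨a.den * b.den, by positivity, ?_⟩
  rw [f_pow]
  obtain ⟨k, hk⟩ := int_smul a b
  obtain ⟨m, hm⟩ := int_smul b a
  rw [mul_comm b.den a.den] at hm
  rw [hk, hm]
  exact f_eq_one_of_int q k m

lemma f_surj (y : ℂˣ ⧸ Subgroup.zpowers q)
    (hy : y ∈ CommGroup.torsion (ℂˣ ⧸ Subgroup.zpowers q)) :
    ∃ a b : ℚ, f q a b = y := by
  obtain ⟨x, rfl⟩ := QuotientGroup.mk_surjective y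
  rw [CommGroup.mem_torsion, isOfFinOrder_iff_pow_eq_one] at hy
  obtain ⟨n, hn, hyn⟩ := hy
  rw [← QuotientGroup.mk_pow, QuotientGroup.eq_one_iff, Subgroup.mem_zpowers_iff] at hyn
  obtain ⟨m, hm⟩ := hyn
  -- `x ^ n = q ^ m`
  set w := Complex.log (x : ℂ) with hw
  have hxw : Complex.exp w = (x : ℂ) := Complex.exp_log (Units.ne_zero x)
  have hexp : Complex.exp ((n : ℂ) * w) = Complex.exp ((m : ℂ) * Complex.log (q : ℂ)) := by
    rw [Complex.exp_nat_mul, Complex.exp_int_mul, hxw, Complex.exp_log (Units.ne_zero q)]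
    exact_mod_cast (congrArg Units.val hm).symm
  rw [Complex.exp_eq_exp_iff_exists_int] at hexp
  obtain ⟨k, hk⟩ := hexp
  refine ⟨(k : ℚ) / n, (m : ℚ) / n, ?_⟩
  have hn0 : (n : ℂ) ≠ 0 := by exact_mod_cast hn.ne'
  have hzw : (((k : ℚ) / n : ℚ) : ℂ) * (2 * (Real.pi : ℂ) * I)
      + (((m : ℚ) / n : ℚ) : ℂ) * Complex.log q = w := by
    push_cast
    rw [div_mul_eq_mul_div, div_mul_eq_mul_div, ← add_div, div_eq_iff hn0]
    linear_combination -hk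
  unfold f
  rw [hzw]
  congr 1
  ext
  rw [eu_coe, hxw]

end Stmt18

open Stmt18 in
/-- For `|q| > 1`, the torsion subgroup of `E_q = ℂˣ/q^ℤ` is isomorphic to
`(ℚ/ℤ) × (ℚ/ℤ)`. -/
theorem stmt18 (q : ℂˣ) (hq : 1 < ‖(q : ℂ)‖) :
    Nonempty ((CommGroup.torsion (ℂˣ ⧸ Subgroup.zpowers q)) ≃*
      Multiplicative ((ℚ ⧸ AddSubgroup.zmultiples (1 : ℚ)) ×
        (ℚ ⧸ AddSubgroup.zmultiples (1 : ℚ)))) := by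
  set T := CommGroup.torsion (ℂˣ ⧸ Subgroup.zpowers q) with hT
  set A := AddSubgroup.zmultiples (1 : ℚ) with hA
  -- the homomorphism `ℚ × ℚ → Additive T`
  have f00 : f q 0 0 = 1 := by exact_mod_cast f_eq_one_of_int q 0 0
  let h : ℚ × ℚ →+ Additive T :=
    { toFun := fun p => Additive.ofMul (⟨f q p.1 p.2, f_torsion q p.1 p.2⟩ : T)
      map_zero' := by
        simp only [← ofMul_one]
        congr 1
        exact Subtype.ext f00
      map_add' := by
        intro p p'
        simp only [← ofMul_mul]
        congr 1
        exact Subtype.ext (f_add q p.1 p.2 p'.1 p'.2) }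
  have hh : Function.Surjective h := by
    rintro t
    obtain ⟨a, b, hab⟩ := f_surj q (t.toMul : ℂˣ ⧸ Subgroup.zpowers q) t.toMul.2
    exact ⟨(a, b), Subtype.ext hab⟩
  -- the homomorphism `ℚ × ℚ → (ℚ ⧸ A) × (ℚ ⧸ A)`
  let g : ℚ × ℚ →+ (ℚ ⧸ A) × (ℚ ⧸ A) :=
    (QuotientAddGroup.mk' A).prodMap (QuotientAddGroup.mk' A)
  have hg : Function.Surjective g := by
    rintro ⟨y₁, y₂⟩
    obtain ⟨a, rfl⟩ := QuotientAddGroup.mk'_surjective A y₁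
    obtain ⟨b, rfl⟩ := QuotientAddGroup.mk'_surjective A y₂
    exact ⟨(a, b), rfl⟩
  have memA : ∀ a : ℚ, a ∈ A ↔ ∃ k : ℤ, a = k := by
    intro a
    rw [hA, AddSubgroup.mem_zmultiples_iff]
    constructor
    · rintro ⟨k, hk⟩; exact ⟨k, by simpa using hk.symm⟩
    · rintro ⟨k, hk⟩; exact ⟨k, by simpa using hk.symm⟩
  have hker : h.ker = g.ker := by
    ext ⟨a, b⟩
    rw [AddMonoidHom.mem_ker, AddMonoidHom.mem_ker]
    have h1 : h (a, b) = 0 ↔ f q a b = 1 := by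
      constructor
      · intro hz
        have := congrArg (fun t : Additive T => (t.toMul : ℂˣ ⧸ Subgroup.zpowers q)) hz
        simpa [h] using this
      · intro hz
        have ht : (⟨f q a b, f_torsion q a b⟩ : T) = 1 := Subtype.ext (by simpa using hz)
        simp [h, ht]
    have h2 : g (a, b) = 0 ↔ a ∈ A ∧ b ∈ A := by
      simp [g, Prod.ext_iff, QuotientAddGroup.mk'_apply, QuotientAddGroup.eq_zero_iff]
    rw [h1, h2, f_eq_one_iff q hq, memA, memA]
  let e2 : (ℚ × ℚ) ⧸ h.ker ≃+ Additive T :=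
    QuotientAddGroup.quotientKerEquivOfSurjective h hh
  let e1 : (ℚ × ℚ) ⧸ g.ker ≃+ (ℚ ⧸ A) × (ℚ ⧸ A) :=
    QuotientAddGroup.quotientKerEquivOfSurjective g hg
  rw [← hker] at e1
  exact ⟨AddEquiv.toMultiplicativeRight (e2.symm.trans e1)⟩
end
end
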